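/- arXiv:1205.1284 — 9 statements merged into one kernel-verified Lean document; each statement's English description precedes it below -/
import Mathlib

section
/- For any two i.i.d. real-valued random variables X and Y with finite first moments, E|X-Y| ≤ E|X+Y|. -/
open MeasureTheory ProbabilityTheory Set

noncomputable def gg (t x : ℝ) : ℝ := (if t < x then 1 else 0) - (if t < -x then 1 else 0)

lemma gg_abs_le (t x : ℝ) : |gg t x| ≤ 1 := by
  unfold gg; split_ifs <;> norm_num

lemma gg_eq_zero {t x : ℝ} (h : |x| ≤ t) : gg t x = 0 := by
  have h1 : x ≤ t := le_trans (le_abs_self x) h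
  have h2 : -x ≤ t := le_trans (neg_le_abs x) h
  unfold gg; rw [if_neg (not_lt.2 h1), if_neg (not_lt.2 h2), sub_zero]

lemma gg_meas_x (t : ℝ) : Measurable (fun x => gg t x) := by
  unfold gg
  have h1 : MeasurableSet {x : ℝ | t < x} := measurableSet_Ioi
  have h2 : MeasurableSet {x : ℝ | t < -x} := by
    have : {x : ℝ | t < -x} = Iio (-t) := by ext x; simp; constructor <;> intro <;> linarith
    rw [this]; exact measurableSet_Iio
  exact ((measurable_const.ite h1 measurable_const).sub
    (measurable_const.ite h2 measurable_const))

lemma gg_meas_t (x : ℝ) : Measurable (fun t => gg t x) := by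
  unfold gg
  exact ((measurable_const.ite measurableSet_Iio measurable_const).sub
    (measurable_const.ite measurableSet_Iio measurable_const))

lemma gg_bound (t a b : ℝ) : ‖gg t a * gg t b‖ ≤ (if t < |a| then (1:ℝ) else 0) := by
  by_cases h : t < |a|
  · rw [if_pos h, Real.norm_eq_abs, abs_mul]
    exact mul_le_one₀ (gg_abs_le t a) (abs_nonneg _) (gg_abs_le t b)
  · rw [if_neg h, gg_eq_zero (not_lt.1 h), zero_mul, norm_zero]

lemma int_I (c : ℝ) : ∫ t in Ioi (0:ℝ), (if t < c then (1:ℝ) else 0) = max c 0 := by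
  have : (fun t => if t < c then (1:ℝ) else 0) = (Iio c).indicator (fun _ => 1) := by
    ext t; simp [Set.indicator_apply]
  rw [this, integral_indicator measurableSet_Iio,
    Measure.restrict_restrict measurableSet_Iio]
  have : Iio c ∩ Ioi 0 = Ioo 0 c := by ext t; simp [and_comm]
  rw [this, setIntegral_const, measureReal_def, Real.volume_Ioo, smul_eq_mul, mul_one]
  rcases le_total c 0 with h | h
  · rw [sub_zero, ENNReal.ofReal_of_nonpos h]; simp [max_eq_right h]
  · rw [ENNReal.toReal_ofReal (by linarith), max_eq_left h, sub_zero]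

lemma integrable_I (c : ℝ) :
    Integrable (fun t => if t < c then (1:ℝ) else 0) (volume.restrict (Ioi 0)) := by
  have : (fun t => if t < c then (1:ℝ) else 0) = (Iio c).indicator (fun _ => 1) := by
    ext t; simp [Set.indicator_apply]
  rw [this, integrable_indicator_iff measurableSet_Iio]
  refine integrableOn_const ?_
  rw [Measure.restrict_apply measurableSet_Iio]
  have : Iio c ∩ Ioi 0 = Ioo 0 c := by ext t; simp [and_comm]
  rw [this]; exact measure_Ioo_lt_top.ne

lemma real_id (a b : ℝ) :
    max (min a b) 0 - max (min a (-b)) 0 - max (min (-a) b) 0 + max (min (-a) (-b)) 0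
      = (|a + b| - |a - b|) / 2 := by
  rcases le_total 0 a with ha | ha <;> rcases le_total 0 b with hb | hb
  · rw [max_eq_left (le_min ha hb),
      max_eq_right ((min_le_right a (-b)).trans (neg_nonpos.2 hb)),
      max_eq_right ((min_le_left (-a) b).trans (neg_nonpos.2 ha)),
      max_eq_right ((min_le_left (-a) (-b)).trans (neg_nonpos.2 ha)),
      abs_of_nonneg (by linarith : (0:ℝ) ≤ a + b)]
    rcases le_total a b with h | h
    · rw [min_eq_left h, abs_of_nonpos (by linarith : a - b ≤ 0)]; ring
    · rw [min_eq_right h, abs_of_nonneg (by linarith : (0:ℝ) ≤ a - b)]; ring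
  · rw [max_eq_right ((min_le_right a b).trans hb),
      max_eq_left (le_min ha (neg_nonneg.2 hb)),
      max_eq_right ((min_le_left (-a) b).trans (neg_nonpos.2 ha)),
      max_eq_right ((min_le_left (-a) (-b)).trans (neg_nonpos.2 ha)),
      abs_of_nonneg (by linarith : (0:ℝ) ≤ a - b)]
    rcases le_total a (-b) with h | h
    · rw [min_eq_left h, abs_of_nonpos (by linarith : a + b ≤ 0)]; ring
    · rw [min_eq_right h, abs_of_nonneg (by linarith : (0:ℝ) ≤ a + b)]; ring
  · rw [max_eq_right ((min_le_left a b).trans ha),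
      max_eq_right ((min_le_left a (-b)).trans ha),
      max_eq_left (le_min (neg_nonneg.2 ha) hb),
      max_eq_right ((min_le_right (-a) (-b)).trans (neg_nonpos.2 hb)),
      abs_of_nonpos (by linarith : a - b ≤ 0)]
    rcases le_total (-a) b with h | h
    · rw [min_eq_left h, abs_of_nonneg (by linarith : (0:ℝ) ≤ a + b)]; ring
    · rw [min_eq_right h, abs_of_nonpos (by linarith : a + b ≤ 0)]; ring
  · rw [max_eq_right ((min_le_left a b).trans ha),
      max_eq_right ((min_le_left a (-b)).trans ha),
      max_eq_right ((min_le_right (-a) b).trans hb),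
      max_eq_left (le_min (neg_nonneg.2 ha) (neg_nonneg.2 hb)),
      abs_of_nonpos (by linarith : a + b ≤ 0)]
    rcases le_total (-a) (-b) with h | h
    · rw [min_eq_left h, abs_of_nonneg (by linarith : (0:ℝ) ≤ a - b)]; ring
    · rw [min_eq_right h, abs_of_nonpos (by linarith : a - b ≤ 0)]; ring

lemma if_mul (t a b : ℝ) :
    (if t < a then (1:ℝ) else 0) * (if t < b then 1 else 0)
      = if t < min a b then 1 else 0 := by
  simp only [lt_min_iff]; split_ifs <;> simp_all

lemma gg_mul (t a b : ℝ) :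
    gg t a * gg t b =
      (if t < min a b then (1:ℝ) else 0) - (if t < min a (-b) then 1 else 0)
        - (if t < min (-a) b then 1 else 0) + (if t < min (-a) (-b) then 1 else 0) := by
  unfold gg
  rw [sub_mul, mul_sub, mul_sub, if_mul, if_mul, if_mul, if_mul]
  ring

lemma int_gg (a b : ℝ) :
    ∫ t in Ioi (0:ℝ), gg t a * gg t b = (|a + b| - |a - b|) / 2 := by
  have h1 := integrable_I (min a b)
  have h2 := integrable_I (min a (-b))
  have h3 := integrable_I (min (-a) b)
  have h4 := integrable_I (min (-a) (-b))
  have h12 : Integrable (fun t => (if t < min a b then (1:ℝ) else 0)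
      - (if t < min a (-b) then 1 else 0)) (volume.restrict (Ioi 0)) := h1.sub h2
  have h123 : Integrable (fun t => (if t < min a b then (1:ℝ) else 0)
      - (if t < min a (-b) then 1 else 0) - (if t < min (-a) b then 1 else 0))
      (volume.restrict (Ioi 0)) := h12.sub h3
  calc ∫ t in Ioi (0:ℝ), gg t a * gg t b
      = ∫ t in Ioi (0:ℝ), ((if t < min a b then (1:ℝ) else 0) - (if t < min a (-b) then 1 else 0)
          - (if t < min (-a) b then 1 else 0) + (if t < min (-a) (-b) then 1 else 0)) := by
        refine integral_congr_ae (Filter.Eventually.of_forall fun t => ?_)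
        exact gg_mul t a b
    _ = (|a + b| - |a - b|) / 2 := by
        rw [integral_add h123 h4, integral_sub h12 h3,
          integral_sub h1 h2, int_I, int_I, int_I, int_I, real_id]

lemma main_aux {Ω : Type*} [MeasurableSpace Ω] {μ : Measure Ω} [IsProbabilityMeasure μ]
    (X Y : Ω → ℝ) (hX : Measurable X) (hY : Measurable Y)
    (hindep : IndepFun X Y μ) (hid : IdentDistrib X Y μ μ)
    (hint : Integrable X μ) :
    ∫ ω, |X ω - Y ω| ∂μ ≤ ∫ ω, |X ω + Y ω| ∂μ := by
  have hYint : Integrable Y μ := hid.integrable_iff.1 hint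
  set ν : Measure ℝ := volume.restrict (Ioi 0) with hν
  -- joint measurability
  have hFmeas : Measurable (fun p : Ω × ℝ => gg p.2 (X p.1) * gg p.2 (Y p.1)) := by
    have m1 : ∀ (Z : Ω → ℝ), Measurable Z →
        Measurable (fun p : Ω × ℝ => gg p.2 (Z p.1)) := by
      intro Z hZ
      have s1 : MeasurableSet {p : Ω × ℝ | p.2 < Z p.1} :=
        measurableSet_lt measurable_snd (hZ.comp measurable_fst)
      have s2 : MeasurableSet {p : Ω × ℝ | p.2 < -(Z p.1)} :=
        measurableSet_lt measurable_snd ((hZ.comp measurable_fst)).neg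
      exact (measurable_const.ite s1 measurable_const).sub
        (measurable_const.ite s2 measurable_const)
    exact (m1 X hX).mul (m1 Y hY)
  -- integrability on the product
  have hFint : Integrable (fun p : Ω × ℝ => gg p.2 (X p.1) * gg p.2 (Y p.1)) (μ.prod ν) := by
    refine (integrable_prod_iff hFmeas.aestronglyMeasurable).2 ⟨?_, ?_⟩
    · refine Filter.Eventually.of_forall fun ω => ?_
      refine (integrable_I |X ω|).mono ((gg_meas_t (X ω)).mul (gg_meas_t (Y ω))).aestronglyMeasurable
        (Filter.Eventually.of_forall fun t => ?_)
      refine (gg_bound t (X ω) (Y ω)).trans ?_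
      rw [Real.norm_eq_abs]; exact le_abs_self _
    · refine (hint.abs).mono
        (hFmeas.aestronglyMeasurable.norm.integral_prod_right') 
        (Filter.Eventually.of_forall fun ω => ?_)
      have hnn : 0 ≤ ∫ t, ‖gg t (X ω) * gg t (Y ω)‖ ∂ν :=
        integral_nonneg fun t => norm_nonneg _
      rw [Real.norm_eq_abs, abs_of_nonneg hnn, Real.norm_eq_abs, abs_abs]
      have hle : ∫ t, ‖gg t (X ω) * gg t (Y ω)‖ ∂ν ≤ max |X ω| 0 := by
        rw [← int_I]
        exact integral_mono_of_nonneg (Filter.Eventually.of_forall fun t => norm_nonneg _)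
          (integrable_I _) (Filter.Eventually.of_forall fun t => gg_bound t (X ω) (Y ω))
      calc ∫ t, ‖gg t (X ω) * gg t (Y ω)‖ ∂ν ≤ max |X ω| 0 := hle
        _ = |X ω| := max_eq_left (abs_nonneg _)
  -- Fubini
  have hswap : ∫ ω, (∫ t, gg t (X ω) * gg t (Y ω) ∂ν) ∂μ
      = ∫ t, (∫ ω, gg t (X ω) * gg t (Y ω) ∂μ) ∂ν :=
    integral_integral_swap hFint
  -- inner integral via independence and identical distribution
  have hIZ : ∀ (t : ℝ) (Z : Ω → ℝ), Measurable Z → Integrable (fun ω => gg t (Z ω)) μ := by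
    intro t Z hZ
    refine (integrable_const (1:ℝ)).mono
      ((gg_meas_x t).comp hZ).aestronglyMeasurable
      (Filter.Eventually.of_forall fun ω => ?_)
    rw [Real.norm_eq_abs, norm_one]
    exact gg_abs_le t (Z ω)
  have hinner : ∀ t : ℝ, ∫ ω, gg t (X ω) * gg t (Y ω) ∂μ = (∫ ω, gg t (X ω) ∂μ) ^ 2 := by
    intro t
    have hi : IndepFun (fun ω => gg t (X ω)) (fun ω => gg t (Y ω)) μ :=
      hindep.comp (gg_meas_x t) (gg_meas_x t)
    have hmul := hi.integral_mul_eq_mul_integral (hIZ t X hX).aestronglyMeasurable (hIZ t Y hY).aestronglyMeasurable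
    rw [show (fun ω => gg t (X ω) * gg t (Y ω))
        = (fun ω => gg t (X ω)) * (fun ω => gg t (Y ω)) from rfl, hmul]
    have heq : ∫ ω, gg t (X ω) ∂μ = ∫ ω, gg t (Y ω) ∂μ :=
      (hid.comp (gg_meas_x t)).integral_eq
    rw [← heq]; ring
  have hnn : 0 ≤ ∫ t, (∫ ω, gg t (X ω) * gg t (Y ω) ∂μ) ∂ν :=
    integral_nonneg fun t => by rw [hinner t]; positivity
  -- put it together
  have hpt : ∀ ω, |X ω + Y ω| - |X ω - Y ω| = 2 * ∫ t, gg t (X ω) * gg t (Y ω) ∂ν := by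
    intro ω; rw [hν, int_gg]; ring
  have hkey : 0 ≤ ∫ ω, (|X ω + Y ω| - |X ω - Y ω|) ∂μ := by
    have : ∫ ω, (|X ω + Y ω| - |X ω - Y ω|) ∂μ
        = ∫ ω, 2 * (∫ t, gg t (X ω) * gg t (Y ω) ∂ν) ∂μ := by
      refine integral_congr_ae (Filter.Eventually.of_forall fun ω => ?_)
      exact hpt ω
    rw [this, integral_const_mul, hswap]
    linarith
  have hsum : Integrable (fun ω => |X ω + Y ω|) μ := (hint.add hYint).abs
  have hdiff : Integrable (fun ω => |X ω - Y ω|) μ := (hint.sub hYint).abs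
  rw [integral_sub hsum hdiff] at hkey
  linarith

theorem abs_diff_exp_le_abs_sum_exp
    {Ω : Type*} [MeasurableSpace Ω] {μ : Measure Ω} [IsProbabilityMeasure μ]
    (X Y : Ω → ℝ) (hindep : IndepFun X Y μ) (hid : IdentDistrib X Y μ μ)
    (hint : Integrable X μ) :
    ∫ ω, |X ω - Y ω| ∂μ ≤ ∫ ω, |X ω + Y ω| ∂μ := by
  have hX := hid.aemeasurable_fst
  have hY := hid.aemeasurable_snd
  set X' := hX.mk X with hX'
  set Y' := hY.mk Y with hY'
  have hXe : X =ᵐ[μ] X' := hX.ae_eq_mk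
  have hYe : Y =ᵐ[μ] Y' := hY.ae_eq_mk
  have hindep' : IndepFun X' Y' μ := hindep.congr hXe hYe
  have hid' : IdentDistrib X' Y' μ μ := by
    refine ⟨hX.measurable_mk.aemeasurable, hY.measurable_mk.aemeasurable, ?_⟩
    rw [← Measure.map_congr hXe, ← Measure.map_congr hYe]
    exact hid.map_eq
  have hint' : Integrable X' μ := hint.congr hXe
  have h := main_aux X' Y' hX.measurable_mk hY.measurable_mk hindep' hid' hint'
  have e1 : ∫ ω, |X ω - Y ω| ∂μ = ∫ ω, |X' ω - Y' ω| ∂μ := by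
    refine integral_congr_ae ?_
    filter_upwards [hXe, hYe] with ω h1 h2
    rw [h1, h2]
  have e2 : ∫ ω, |X ω + Y ω| ∂μ = ∫ ω, |X' ω + Y' ω| ∂μ := by
    refine integral_congr_ae ?_
    filter_upwards [hXe, hYe] with ω h1 h2
    rw [h1, h2]
  rw [e1, e2]; exact h
end

section
/- For any two i.i.d. integrable real-valued random variables X and Y, E|X+Y| - E|X-Y| = 2 ∫₀^∞ (P(X>r) - P(X<-r))² dr. -/
open MeasureTheory ProbabilityTheory Set

noncomputable def hfun (r x : ℝ) : ℝ :=
  (if r < x then 1 else 0) - (if x < -r then 1 else 0)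

lemma hfun_neg (r x : ℝ) : hfun r (-x) = - hfun r x := by
  simp only [hfun, lt_neg, neg_lt]
  split_ifs <;> linarith

lemma abs_hfun_le {r : ℝ} (hr : 0 < r) (x : ℝ) : |hfun r x| ≤ 1 := by
  simp only [hfun]; split_ifs <;> simp only [abs_le] <;> constructor <;> linarith

lemma hfun_eq_zero {r x : ℝ} (hr : 0 < r) (hx : |x| ≤ r) : hfun r x = 0 := by
  obtain ⟨h1, h2⟩ := abs_le.mp hx
  simp only [hfun]
  split_ifs <;> linarith

lemma integral_indicator_Ioo {c : ℝ} (hc : 0 ≤ c) :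
    ∫ r in Ioi (0:ℝ), (Ioo (0:ℝ) c).indicator 1 r = c := by
  rw [setIntegral_indicator measurableSet_Ioo,
    inter_eq_self_of_subset_right Ioo_subset_Ioi_self]
  simp [Real.volume_Ioo, ENNReal.toReal_ofReal hc, hc]

lemma key_nonneg {a b : ℝ} (ha : 0 ≤ a) (hb : 0 ≤ b) :
    ∫ r in Ioi (0:ℝ), hfun r a * hfun r b = min a b := by
  have hcong : ∀ r ∈ Ioi (0:ℝ), hfun r a * hfun r b
      = (Ioo (0:ℝ) (min a b)).indicator 1 r := by
    intro r hr
    simp only [mem_Ioi] at hr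
    have h1 : ¬ a < -r := by linarith
    have h2 : ¬ b < -r := by linarith
    simp only [hfun, h1, h2, if_false, sub_zero, indicator, mem_Ioo, lt_min_iff]
    split_ifs <;> simp_all <;> linarith
  rw [setIntegral_congr_fun measurableSet_Ioi hcong,
    integral_indicator_Ioo (le_min ha hb)]

lemma integral_neg_left (a b : ℝ) :
    ∫ r in Ioi (0:ℝ), hfun r (-a) * hfun r b
      = - ∫ r in Ioi (0:ℝ), hfun r a * hfun r b := by
  rw [← integral_neg]
  refine integral_congr_ae (Filter.Eventually.of_forall fun r => ?_)
  show hfun r _ * hfun r _ = _; rw [hfun_neg]; ring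

lemma integral_neg_right (a b : ℝ) :
    ∫ r in Ioi (0:ℝ), hfun r a * hfun r (-b)
      = - ∫ r in Ioi (0:ℝ), hfun r a * hfun r b := by
  rw [← integral_neg]
  refine integral_congr_ae (Filter.Eventually.of_forall fun r => ?_)
  show hfun r _ * hfun r _ = _; rw [hfun_neg]; ring

lemma key (a b : ℝ) :
    |a + b| - |a - b| = 2 * ∫ r in Ioi (0:ℝ), hfun r a * hfun r b := by
  rcases le_or_gt 0 a with ha | ha <;> rcases le_or_gt 0 b with hb | hb
  · rw [key_nonneg ha hb]
    rcases abs_cases (a + b) with ⟨h1, _⟩ | ⟨h1, h2⟩ <;>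
      rcases abs_cases (a - b) with ⟨h3, h4⟩ | ⟨h3, h4⟩ <;>
      rcases min_cases a b with ⟨h5, _⟩ | ⟨h5, _⟩ <;> linarith
  · have : b = -(-b) := by ring
    rw [this, integral_neg_right, key_nonneg ha (by linarith : (0:ℝ) ≤ -b)]
    rcases abs_cases (a + -(-b)) with ⟨h1, _⟩ | ⟨h1, h2⟩ <;>
      rcases abs_cases (a - -(-b)) with ⟨h3, h4⟩ | ⟨h3, h4⟩ <;>
      rcases min_cases a (-b) with ⟨h5, _⟩ | ⟨h5, _⟩ <;> linarith
  · have : a = -(-a) := by ring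
    rw [this, integral_neg_left, key_nonneg (by linarith : (0:ℝ) ≤ -a) hb]
    rcases abs_cases (-(-a) + b) with ⟨h1, _⟩ | ⟨h1, h2⟩ <;>
      rcases abs_cases (-(-a) - b) with ⟨h3, h4⟩ | ⟨h3, h4⟩ <;>
      rcases min_cases (-a) b with ⟨h5, _⟩ | ⟨h5, _⟩ <;> linarith
  · have h1 : a = -(-a) := by ring
    have h2 : b = -(-b) := by ring
    rw [h1, h2, integral_neg_left, integral_neg_right,
      key_nonneg (by linarith : (0:ℝ) ≤ -a) (by linarith : (0:ℝ) ≤ -b)]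
    rcases abs_cases (-(-a) + -(-b)) with ⟨h3, _⟩ | ⟨h3, h4⟩ <;>
      rcases abs_cases (-(-a) - -(-b)) with ⟨h5, h6⟩ | ⟨h5, h6⟩ <;>
      rcases min_cases (-a) (-b) with ⟨h7, _⟩ | ⟨h7, _⟩ <;> linarith

lemma measurable_hfun_uncurry : Measurable fun q : ℝ × ℝ => hfun q.1 q.2 := by
  unfold hfun
  exact (Measurable.ite (measurableSet_lt measurable_fst measurable_snd)
      measurable_const measurable_const).sub
    (Measurable.ite (measurableSet_lt measurable_snd measurable_fst.neg)
      measurable_const measurable_const)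

lemma measurable_hfun (r : ℝ) : Measurable (hfun r) :=
  measurable_hfun_uncurry.comp (measurable_const.prodMk measurable_id)

lemma hh_bound {r : ℝ} (hr : r ∈ Ioi (0:ℝ)) (a b : ℝ) :
    ‖hfun r a * hfun r b‖ ≤ ‖(Ioo (0:ℝ) |a|).indicator (1 : ℝ → ℝ) r‖ := by
  simp only [mem_Ioi] at hr
  rcases le_or_gt |a| r with h | h
  · rw [hfun_eq_zero hr h, zero_mul, norm_zero]
    exact norm_nonneg _
  · have : (Ioo (0:ℝ) |a|).indicator (1 : ℝ → ℝ) r = 1 :=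
      indicator_of_mem (mem_Ioo.mpr ⟨hr, h⟩) 1
    rw [this, Real.norm_eq_abs, Real.norm_eq_abs, abs_mul, abs_one]
    exact mul_le_one₀ (abs_hfun_le hr a) (abs_nonneg _) (abs_hfun_le hr b)

lemma indicator_Ioo_integrable (c : ℝ) :
    Integrable ((Ioo (0:ℝ) c).indicator (1 : ℝ → ℝ)) (volume.restrict (Ioi 0)) := by
  rw [integrable_indicator_iff measurableSet_Ioo]
  exact integrableOn_const ((Measure.restrict_apply_le _ _).trans_lt
    measure_Ioo_lt_top).ne

lemma hh_integrable (a b : ℝ) :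
    Integrable (fun r => hfun r a * hfun r b) (volume.restrict (Ioi 0)) := by
  refine Integrable.mono (indicator_Ioo_integrable |a|)
    (((measurable_hfun_uncurry.comp (measurable_id.prodMk measurable_const)).mul
      (measurable_hfun_uncurry.comp (measurable_id.prodMk measurable_const))).aestronglyMeasurable)
    ?_
  filter_upwards [self_mem_ae_restrict measurableSet_Ioi] with r hr
  exact hh_bound hr a b

lemma hh_norm_integral_le (a b : ℝ) :
    ∫ r in Ioi (0:ℝ), ‖hfun r a * hfun r b‖ ≤ |a| := by
  calc ∫ r in Ioi (0:ℝ), ‖hfun r a * hfun r b‖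
      ≤ ∫ r in Ioi (0:ℝ), ‖(Ioo (0:ℝ) |a|).indicator (1 : ℝ → ℝ) r‖ := by
        refine integral_mono_ae (hh_integrable a b).norm (indicator_Ioo_integrable |a|).norm ?_
        filter_upwards [self_mem_ae_restrict measurableSet_Ioi] with r hr
        exact hh_bound hr a b
    _ = ∫ r in Ioi (0:ℝ), (Ioo (0:ℝ) |a|).indicator (1 : ℝ → ℝ) r := by
        refine integral_congr_ae (Filter.Eventually.of_forall fun r => ?_)
        show ‖(Ioo (0:ℝ) |a|).indicator (1 : ℝ → ℝ) r‖ = _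
        rw [Real.norm_eq_abs]
        exact abs_of_nonneg (Set.indicator_nonneg (fun _ _ => zero_le_one) r)
    _ = |a| := integral_indicator_Ioo (abs_nonneg a)

theorem aux {Ω : Type*} [MeasurableSpace Ω] {μ : Measure Ω} [IsProbabilityMeasure μ]
    (X Y : Ω → ℝ) (hX : Measurable X) (hY : Measurable Y)
    (hindep : IndepFun X Y μ) (hid : IdentDistrib X Y μ μ)
    (hintX : Integrable X μ) (hintY : Integrable Y μ) :
    (∫ ω, |X ω + Y ω| ∂μ) - ∫ ω, |X ω - Y ω| ∂μ
      = 2 * ∫ r in Set.Ioi (0 : ℝ),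
          ((μ {ω | X ω > r}).toReal - (μ {ω | X ω < -r}).toReal) ^ 2 := by
  have hint1 : Integrable (fun ω => |X ω + Y ω|) μ := (hintX.add hintY).abs
  have hint2 : Integrable (fun ω => |X ω - Y ω|) μ := (hintX.sub hintY).abs
  rw [← integral_sub hint1 hint2]
  have hkey : (fun ω => |X ω + Y ω| - |X ω - Y ω|)
      = fun ω => 2 * ∫ r in Ioi (0:ℝ), hfun r (X ω) * hfun r (Y ω) := by
    funext ω; exact key (X ω) (Y ω)
  rw [hkey, integral_const_mul]
  congr 1
  -- Fubini
  have hFm : AEStronglyMeasurable (Function.uncurry fun ω r => hfun r (X ω) * hfun r (Y ω))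
      (μ.prod (volume.restrict (Ioi 0))) := by
    refine Measurable.aestronglyMeasurable ?_
    exact (measurable_hfun_uncurry.comp
        (measurable_snd.prodMk (hX.comp measurable_fst))).mul
      (measurable_hfun_uncurry.comp (measurable_snd.prodMk (hY.comp measurable_fst)))
  have hFint : Integrable (Function.uncurry fun ω r => hfun r (X ω) * hfun r (Y ω))
      (μ.prod (volume.restrict (Ioi 0))) := by
    refine (integrable_prod_iff hFm).mpr ⟨?_, ?_⟩
    · exact Filter.Eventually.of_forall fun ω => hh_integrable (X ω) (Y ω)
    · refine Integrable.mono hintX.abs hFm.norm.integral_prod_right' ?_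
      refine Filter.Eventually.of_forall fun ω => ?_
      rw [Real.norm_eq_abs, Real.norm_eq_abs, abs_abs,
        abs_of_nonneg (integral_nonneg fun r => norm_nonneg _)]
      exact hh_norm_integral_le (X ω) (Y ω)
  rw [integral_integral_swap hFint]
  refine setIntegral_congr_fun measurableSet_Ioi fun r hr => ?_
  -- independence for fixed r
  have hic : IndepFun (fun ω => hfun r (X ω)) (fun ω => hfun r (Y ω)) μ :=
    hindep.comp (measurable_hfun r) (measurable_hfun r)
  have eX : (fun ω => hfun r (X ω)) = fun ω =>
      (X ⁻¹' (Ioi r)).indicator (fun _ => (1:ℝ)) ω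
        - (X ⁻¹' (Iio (-r))).indicator (fun _ => (1:ℝ)) ω := by
    funext ω
    simp [hfun, indicator, mem_preimage, mem_Ioi, mem_Iio]
  have eY : (fun ω => hfun r (Y ω)) = fun ω =>
      (Y ⁻¹' (Ioi r)).indicator (fun _ => (1:ℝ)) ω
        - (Y ⁻¹' (Iio (-r))).indicator (fun _ => (1:ℝ)) ω := by
    funext ω
    simp [hfun, indicator, mem_preimage, mem_Ioi, mem_Iio]
  have iX1 : Integrable ((X ⁻¹' (Ioi r)).indicator (fun _ => (1:ℝ))) μ :=
    (integrable_const 1).indicator (hX measurableSet_Ioi)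
  have iX2 : Integrable ((X ⁻¹' (Iio (-r))).indicator (fun _ => (1:ℝ))) μ :=
    (integrable_const 1).indicator (hX measurableSet_Iio)
  have iY1 : Integrable ((Y ⁻¹' (Ioi r)).indicator (fun _ => (1:ℝ))) μ :=
    (integrable_const 1).indicator (hY measurableSet_Ioi)
  have iY2 : Integrable ((Y ⁻¹' (Iio (-r))).indicator (fun _ => (1:ℝ))) μ :=
    (integrable_const 1).indicator (hY measurableSet_Iio)
  have intX : Integrable (fun ω => hfun r (X ω)) μ := by rw [eX]; exact iX1.sub iX2
  have intY : Integrable (fun ω => hfun r (Y ω)) μ := by rw [eY]; exact iY1.sub iY2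
  have hmul : ∫ ω, hfun r (X ω) * hfun r (Y ω) ∂μ
      = (∫ ω, hfun r (X ω) ∂μ) * ∫ ω, hfun r (Y ω) ∂μ :=
    hic.integral_fun_mul_eq_mul_integral intX.1 intY.1
  have hEX : ∫ ω, hfun r (X ω) ∂μ
      = (μ {ω | X ω > r}).toReal - (μ {ω | X ω < -r}).toReal := by
    rw [eX, integral_sub iX1 iX2, integral_indicator_const (1:ℝ) (hX measurableSet_Ioi),
      integral_indicator_const (1:ℝ) (hX measurableSet_Iio)]
    simp only [smul_eq_mul, mul_one]
    rfl
  have hEY : ∫ ω, hfun r (Y ω) ∂μ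
      = (μ {ω | X ω > r}).toReal - (μ {ω | X ω < -r}).toReal := by
    rw [eY, integral_sub iY1 iY2, integral_indicator_const (1:ℝ) (hY measurableSet_Ioi),
      integral_indicator_const (1:ℝ) (hY measurableSet_Iio)]
    simp only [smul_eq_mul, mul_one]
    rw [measureReal_def, measureReal_def, ← hid.measure_mem_eq measurableSet_Ioi, ← hid.measure_mem_eq measurableSet_Iio]
    rfl
  rw [hmul, hEX, hEY, ← pow_two]

theorem exp_abs_sum_sub_exp_abs_diff_eq
    {Ω : Type*} [MeasurableSpace Ω] {μ : Measure Ω} [IsProbabilityMeasure μ]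
    (X Y : Ω → ℝ) (hindep : IndepFun X Y μ) (hid : IdentDistrib X Y μ μ)
    (hint : Integrable X μ) :
    (∫ ω, |X ω + Y ω| ∂μ) - ∫ ω, |X ω - Y ω| ∂μ
      = 2 * ∫ r in Set.Ioi (0 : ℝ),
          ((μ {ω | X ω > r}).toReal - (μ {ω | X ω < -r}).toReal) ^ 2 := by
  have hintY : Integrable Y μ := hid.integrable_iff.mp hint
  set X' : Ω → ℝ := hint.aestronglyMeasurable.mk X with hX'def
  set Y' : Ω → ℝ := hintY.aestronglyMeasurable.mk Y with hY'def
  have hX' : Measurable X' := hint.aestronglyMeasurable.stronglyMeasurable_mk.measurable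
  have hY' : Measurable Y' := hintY.aestronglyMeasurable.stronglyMeasurable_mk.measurable
  have hXX' : X =ᵐ[μ] X' := hint.aestronglyMeasurable.ae_eq_mk
  have hYY' : Y =ᵐ[μ] Y' := hintY.aestronglyMeasurable.ae_eq_mk
  have hindep' : IndepFun X' Y' μ := hindep.congr hXX' hYY'
  have hid' : IdentDistrib X' Y' μ μ :=
    ⟨hX'.aemeasurable, hY'.aemeasurable, by
      rw [← Measure.map_congr hXX', ← Measure.map_congr hYY', hid.map_eq]⟩
  have hintX' : Integrable X' μ := hint.congr hXX'
  have hintY' : Integrable Y' μ := hintY.congr hYY'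
  have hgt : ∀ r : ℝ, μ {ω | X' ω > r} = μ {ω | X ω > r} := fun r =>
    measure_congr (by filter_upwards [hXX'] with ω h
                      show (X' ω > r) = (X ω > r); rw [h])
  have hlt : ∀ r : ℝ, μ {ω | X' ω < -r} = μ {ω | X ω < -r} := fun r =>
    measure_congr (by filter_upwards [hXX'] with ω h
                      show (X' ω < -r) = (X ω < -r); rw [h])
  calc (∫ ω, |X ω + Y ω| ∂μ) - ∫ ω, |X ω - Y ω| ∂μ
      = (∫ ω, |X' ω + Y' ω| ∂μ) - ∫ ω, |X' ω - Y' ω| ∂μ := by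
        congr 1 <;> refine integral_congr_ae ?_ <;>
          filter_upwards [hXX', hYY'] with ω h1 h2 <;> rw [h1, h2]
    _ = 2 * ∫ r in Set.Ioi (0 : ℝ),
          ((μ {ω | X' ω > r}).toReal - (μ {ω | X' ω < -r}).toReal) ^ 2 :=
        aux X' Y' hX' hY' hindep' hid' hintX' hintY'
    _ = 2 * ∫ r in Set.Ioi (0 : ℝ),
          ((μ {ω | X ω > r}).toReal - (μ {ω | X ω < -r}).toReal) ^ 2 := by
        congr 1
        refine integral_congr_ae (Filter.Eventually.of_forall fun r => ?_)
        show ((μ {ω | X' ω > r}).toReal - (μ {ω | X' ω < -r}).toReal) ^ 2 = _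
        rw [hgt r, hlt r]
end

section
/- Let ψ: ℝⁿ → ℝ be given by ψ(ξ) = ∫_{ℝⁿ∖{0}} (1 - cos⟨ξ,u⟩) ν(du), where ν is a Lévy measure (i.e. ∫ min{‖u‖₂², 1} ν(du) < ∞). Then for any i.i.d. random vectors X, Y in ℝⁿ, E ψ(X-Y) ≤ E ψ(X+Y). -/
open MeasureTheory ProbabilityTheory
open scoped ENNReal RealInnerProductSpace

set_option maxHeartbeats 1000000

theorem negdef_exp_ineq
    {Ω : Type*} [MeasurableSpace Ω] {μ : Measure Ω} [IsProbabilityMeasure μ]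
    (n : ℕ) (ν : Measure (EuclideanSpace ℝ (Fin n)))
    (hν0 : ν {0} = 0)
    (hν : ∫⁻ u, ENNReal.ofReal (min (‖u‖ ^ 2) 1) ∂ν < ∞)
    (ψ : EuclideanSpace ℝ (Fin n) → ℝ)
    (hψ : ∀ ξ, ψ ξ = ∫ u, (1 - Real.cos ⟪ξ, u⟫) ∂ν)
    (X Y : Ω → EuclideanSpace ℝ (Fin n))
    (hindep : IndepFun X Y μ) (hid : IdentDistrib X Y μ μ) :
    ∫⁻ ω, ENNReal.ofReal (ψ (X ω - Y ω)) ∂μ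
      ≤ ∫⁻ ω, ENNReal.ofReal (ψ (X ω + Y ω)) ∂μ := by
  have hX : AEMeasurable X μ := hid.aemeasurable_fst
  have hY : AEMeasurable Y μ := hid.aemeasurable_snd
  have hcontmin : Continuous fun u : EuclideanSpace ℝ (Fin n) => min (‖u‖ ^ 2) 1 :=
    ((continuous_norm.pow 2).min continuous_const)
  have hmeas_min : Measurable fun u : EuclideanSpace ℝ (Fin n) => ENNReal.ofReal (min (‖u‖ ^ 2) 1) :=
    (ENNReal.continuous_ofReal.comp hcontmin).measurable
  -- ν is sigma-finite
  have hfin : ∀ ε : ℝ, 0 < ε → ν {u : EuclideanSpace ℝ (Fin n) | ε < ‖u‖} < ∞ := by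
    intro ε hε
    have hε1 : (0:ℝ) < min (ε ^ 2) 1 := lt_min (by positivity) one_pos
    have hsub : {u : EuclideanSpace ℝ (Fin n) | ε < ‖u‖} ⊆
        {u : EuclideanSpace ℝ (Fin n) | ENNReal.ofReal (min (ε ^ 2) 1) ≤ ENNReal.ofReal (min (‖u‖ ^ 2) 1)} := by
      intro u hu
      have h2 : ε ^ 2 ≤ ‖u‖ ^ 2 := by
        have h1 : ε ≤ ‖u‖ := le_of_lt hu
        nlinarith [norm_nonneg u, hε]
      exact ENNReal.ofReal_le_ofReal (min_le_min h2 le_rfl)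
    calc ν {u : EuclideanSpace ℝ (Fin n) | ε < ‖u‖} ≤ ν _ := measure_mono hsub
      _ ≤ (∫⁻ u, ENNReal.ofReal (min (‖u‖ ^ 2) 1) ∂ν) / ENNReal.ofReal (min (ε ^ 2) 1) :=
          meas_ge_le_lintegral_div hmeas_min.aemeasurable
            (ENNReal.ofReal_pos.mpr hε1).ne' ENNReal.ofReal_ne_top
      _ < ∞ := ENNReal.div_lt_top hν.ne (ENNReal.ofReal_pos.mpr hε1).ne'
  haveI hσ : SigmaFinite ν := by
    apply Measure.sigmaFinite_of_countable
      (S := Set.range fun k : ℕ => ({0} : Set (EuclideanSpace ℝ (Fin n))) ∪ {u : EuclideanSpace ℝ (Fin n) | 1 / (k + 1 : ℝ) < ‖u‖})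
      (Set.countable_range _)
    · rintro s ⟨k, rfl⟩
      calc ν _ ≤ ν {(0:EuclideanSpace ℝ (Fin n))} + ν {u : EuclideanSpace ℝ (Fin n) | 1 / (k + 1 : ℝ) < ‖u‖} := measure_union_le _ _
        _ < ∞ := by
            rw [hν0, zero_add]
            exact hfin _ (by positivity)
    · apply Set.eq_univ_of_forall
      intro u
      rcases eq_or_ne u 0 with rfl | hu
      · exact ⟨_, ⟨0, rfl⟩, Or.inl rfl⟩
      · obtain ⟨k, hk⟩ := exists_nat_one_div_lt (norm_pos_iff.mpr hu)
        exact ⟨_, ⟨k, rfl⟩, Or.inr hk⟩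
  -- pointwise facts
  have hnn : ∀ t : ℝ, 0 ≤ 1 - Real.cos t := fun t => by
    have := Real.cos_le_one t; linarith
  have hbd : ∀ z u : EuclideanSpace ℝ (Fin n), 1 - Real.cos ⟪z, u⟫ ≤ max (‖z‖ ^ 2) 2 * min (‖u‖ ^ 2) 1 := by
    intro z u
    rcases le_or_gt (‖u‖ ^ 2) 1 with h | h
    · rw [min_eq_left h]
      have h1 : 1 - Real.cos ⟪z, u⟫ ≤ ⟪z, u⟫ ^ 2 / 2 := by
        have := Real.one_sub_sq_div_two_le_cos (x := ⟪z, u⟫); linarith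
      have h2 : ⟪z, u⟫ ^ 2 ≤ ‖z‖ ^ 2 * ‖u‖ ^ 2 := by
        have := abs_real_inner_le_norm z u
        nlinarith [abs_nonneg ⟪z, u⟫, neg_abs_le ⟪z, u⟫, le_abs_self ⟪z, u⟫]
      have h3 : ‖z‖ ^ 2 * ‖u‖ ^ 2 ≤ max (‖z‖ ^ 2) 2 * ‖u‖ ^ 2 := by
        apply mul_le_mul_of_nonneg_right (le_max_left _ _) (by positivity)
      nlinarith
    · rw [min_eq_right h.le]
      have := Real.neg_one_le_cos ⟪z, u⟫
      have h4 : (2:ℝ) ≤ max (‖z‖ ^ 2) 2 := le_max_right _ _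
      nlinarith
  -- integrability over ν
  have hintν : ∀ z : EuclideanSpace ℝ (Fin n), Integrable (fun u : EuclideanSpace ℝ (Fin n) => 1 - Real.cos ⟪z, u⟫) ν := by
    intro z
    have hg : Integrable (fun u : EuclideanSpace ℝ (Fin n) => max (‖z‖ ^ 2) 2 * min (‖u‖ ^ 2) 1) ν := by
      refine ⟨(continuous_const.mul hcontmin).aestronglyMeasurable, ?_⟩
      rw [hasFiniteIntegral_iff_ofReal (ae_of_all _ fun u => by positivity)]
      calc ∫⁻ u, ENNReal.ofReal (max (‖z‖ ^ 2) 2 * min (‖u‖ ^ 2) 1) ∂ν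
          = ∫⁻ u, ENNReal.ofReal (max (‖z‖ ^ 2) 2) * ENNReal.ofReal (min (‖u‖ ^ 2) 1) ∂ν := by
            congr 1; funext u
            rw [ENNReal.ofReal_mul (by positivity)]
        _ = ENNReal.ofReal (max (‖z‖ ^ 2) 2) * ∫⁻ u, ENNReal.ofReal (min (‖u‖ ^ 2) 1) ∂ν :=
            lintegral_const_mul _ hmeas_min
        _ < ∞ := ENNReal.mul_lt_top ENNReal.ofReal_lt_top hν
    have hcont : Continuous fun u : EuclideanSpace ℝ (Fin n) => 1 - Real.cos ⟪z, u⟫ :=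
      continuous_const.sub (Real.continuous_cos.comp (continuous_const.inner continuous_id))
    refine hg.mono' hcont.aestronglyMeasurable (ae_of_all _ fun u => ?_)
    rw [Real.norm_eq_abs, abs_of_nonneg (hnn _)]
    exact hbd z u
  have hpsi : ∀ z : EuclideanSpace ℝ (Fin n), ENNReal.ofReal (ψ z)
      = ∫⁻ u, ENNReal.ofReal (1 - Real.cos ⟪z, u⟫) ∂ν := by
    intro z
    rw [hψ]
    exact ofReal_integral_eq_lintegral_ofReal (hintν z) (ae_of_all _ fun u => hnn _)
  -- Tonelli
  have key : ∀ Z : Ω → EuclideanSpace ℝ (Fin n), AEMeasurable Z μ →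
      ∫⁻ ω, ENNReal.ofReal (ψ (Z ω)) ∂μ
        = ∫⁻ u, ∫⁻ ω, ENNReal.ofReal (1 - Real.cos ⟪Z ω, u⟫) ∂μ ∂ν := by
    intro Z hZ
    simp_rw [hpsi]
    have h1 : AEMeasurable (fun p : Ω × EuclideanSpace ℝ (Fin n) => Z p.1) (μ.prod ν) :=
      hZ.comp_quasiMeasurePreserving Measure.quasiMeasurePreserving_fst
    have h2 : Measurable fun q : EuclideanSpace ℝ (Fin n) × EuclideanSpace ℝ (Fin n) => ENNReal.ofReal (1 - Real.cos ⟪q.1, q.2⟫) := by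
      apply (ENNReal.continuous_ofReal.comp
        (continuous_const.sub (Real.continuous_cos.comp continuous_inner))).measurable
    have h4 := h2.comp_aemeasurable (h1.prodMk measurable_snd.aemeasurable)
    have h3 : AEMeasurable (Function.uncurry fun (ω : Ω) (u : EuclideanSpace ℝ (Fin n)) =>
        ENNReal.ofReal (1 - Real.cos ⟪Z ω, u⟫)) (μ.prod ν) := by
      exact h4
    exact lintegral_lintegral_swap h3
  -- per-u inequality
  have keyu : ∀ u : EuclideanSpace ℝ (Fin n), ∫⁻ ω, ENNReal.ofReal (1 - Real.cos ⟪X ω - Y ω, u⟫) ∂μ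
      ≤ ∫⁻ ω, ENNReal.ofReal (1 - Real.cos ⟪X ω + Y ω, u⟫) ∂μ := by
    intro u
    have mcos : Measurable fun x : EuclideanSpace ℝ (Fin n) => Real.cos ⟪x, u⟫ :=
      (Real.continuous_cos.comp (continuous_id.inner continuous_const)).measurable
    have msin : Measurable fun x : EuclideanSpace ℝ (Fin n) => Real.sin ⟪x, u⟫ :=
      (Real.continuous_sin.comp (continuous_id.inner continuous_const)).measurable
    have hib : ∀ f : Ω → ℝ, AEStronglyMeasurable f μ → (∀ ω, |f ω| ≤ 2) → Integrable f μ :=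
      fun f hf hb => (integrable_const (2:ℝ)).mono' hf
        (ae_of_all _ fun ω => by simpa [Real.norm_eq_abs] using hb ω)
    set cX : Ω → ℝ := fun ω => Real.cos ⟪X ω, u⟫ with hcX
    set sX : Ω → ℝ := fun ω => Real.sin ⟪X ω, u⟫ with hsX
    set cY : Ω → ℝ := fun ω => Real.cos ⟪Y ω, u⟫ with hcY
    set sY : Ω → ℝ := fun ω => Real.sin ⟪Y ω, u⟫ with hsY
    have hmcX : AEStronglyMeasurable cX μ := (mcos.comp_aemeasurable hX).aestronglyMeasurable
    have hmsX : AEStronglyMeasurable sX μ := (msin.comp_aemeasurable hX).aestronglyMeasurable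
    have hmcY : AEStronglyMeasurable cY μ := (mcos.comp_aemeasurable hY).aestronglyMeasurable
    have hmsY : AEStronglyMeasurable sY μ := (msin.comp_aemeasurable hY).aestronglyMeasurable
    have hicc : Integrable (fun ω => cX ω * cY ω) μ :=
      hib _ (hmcX.mul hmcY) fun ω => by
        rw [abs_mul]
        have := mul_le_one₀ (Real.abs_cos_le_one (⟪X ω, u⟫)) (abs_nonneg _)
          (Real.abs_cos_le_one (⟪Y ω, u⟫))
        linarith
    have hiss : Integrable (fun ω => sX ω * sY ω) μ :=
      hib _ (hmsX.mul hmsY) fun ω => by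
        rw [abs_mul]
        have := mul_le_one₀ (Real.abs_sin_le_one (⟪X ω, u⟫)) (abs_nonneg _)
          (Real.abs_sin_le_one (⟪Y ω, u⟫))
        linarith
    set c : ℝ := ∫ ω, cX ω ∂μ with hc
    set s : ℝ := ∫ ω, sX ω ∂μ with hs
    have hYc : ∫ ω, cY ω ∂μ = c := ((hid.comp mcos).integral_eq).symm
    have hYs : ∫ ω, sY ω ∂μ = s := ((hid.comp msin).integral_eq).symm
    have hEcc : ∫ ω, cX ω * cY ω ∂μ = c * c := by
      calc ∫ ω, cX ω * cY ω ∂μ = (∫ ω, cX ω ∂μ) * ∫ ω, cY ω ∂μ :=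
            (hindep.comp mcos mcos).integral_mul_eq_mul_integral hmcX hmcY
        _ = c * c := by rw [hYc]
    have hEss : ∫ ω, sX ω * sY ω ∂μ = s * s := by
      calc ∫ ω, sX ω * sY ω ∂μ = (∫ ω, sX ω ∂μ) * ∫ ω, sY ω ∂μ :=
            (hindep.comp msin msin).integral_mul_eq_mul_integral hmsX hmsY
        _ = s * s := by rw [hYs]
    have habs : ∀ t : ℝ, |1 - Real.cos t| ≤ 2 := by
      intro t
      rw [abs_of_nonneg (hnn t)]
      have := Real.neg_one_le_cos t
      linarith
    have hsubint : Integrable (fun ω => 1 - Real.cos ⟪X ω - Y ω, u⟫) μ :=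
      hib _ ((continuous_const.sub
          (Real.continuous_cos.comp (continuous_id.inner continuous_const))).measurable
          |>.comp_aemeasurable (hX.sub hY) |>.aestronglyMeasurable) (fun ω => habs _)
    have haddint : Integrable (fun ω => 1 - Real.cos ⟪X ω + Y ω, u⟫) μ :=
      hib _ ((continuous_const.sub
          (Real.continuous_cos.comp (continuous_id.inner continuous_const))).measurable
          |>.comp_aemeasurable (hX.add hY) |>.aestronglyMeasurable) (fun ω => habs _)
    have hsubval : ∫ ω, (1 - Real.cos ⟪X ω - Y ω, u⟫) ∂μ = 1 - (c * c + s * s) := by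
      have heq : ∀ ω, 1 - Real.cos ⟪X ω - Y ω, u⟫ = 1 - (cX ω * cY ω + sX ω * sY ω) := by
        intro ω
        rw [inner_sub_left, Real.cos_sub]
      simp_rw [heq]
      have h5 : Integrable (fun ω => cX ω * cY ω + sX ω * sY ω) μ := hicc.add hiss
      rw [integral_sub (integrable_const 1) h5, integral_add hicc hiss,
        hEcc, hEss, integral_const]
      simp
    have haddval : ∫ ω, (1 - Real.cos ⟪X ω + Y ω, u⟫) ∂μ = 1 - (c * c - s * s) := by
      have heq : ∀ ω, 1 - Real.cos ⟪X ω + Y ω, u⟫ = 1 - (cX ω * cY ω - sX ω * sY ω) := by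
        intro ω
        rw [inner_add_left, Real.cos_add]
      simp_rw [heq]
      have h5 : Integrable (fun ω => cX ω * cY ω - sX ω * sY ω) μ := hicc.sub hiss
      rw [integral_sub (integrable_const 1) h5, integral_sub hicc hiss,
        hEcc, hEss, integral_const]
      simp
    calc ∫⁻ ω, ENNReal.ofReal (1 - Real.cos ⟪X ω - Y ω, u⟫) ∂μ
        = ENNReal.ofReal (∫ ω, (1 - Real.cos ⟪X ω - Y ω, u⟫) ∂μ) :=
          (ofReal_integral_eq_lintegral_ofReal hsubint (ae_of_all _ fun ω => hnn _)).symm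
      _ ≤ ENNReal.ofReal (∫ ω, (1 - Real.cos ⟪X ω + Y ω, u⟫) ∂μ) := by
          apply ENNReal.ofReal_le_ofReal
          rw [hsubval, haddval]
          nlinarith [mul_self_nonneg s]
      _ = ∫⁻ ω, ENNReal.ofReal (1 - Real.cos ⟪X ω + Y ω, u⟫) ∂μ :=
          ofReal_integral_eq_lintegral_ofReal haddint (ae_of_all _ fun ω => hnn _)
  calc ∫⁻ ω, ENNReal.ofReal (ψ (X ω - Y ω)) ∂μ
      = ∫⁻ u, ∫⁻ ω, ENNReal.ofReal (1 - Real.cos ⟪X ω - Y ω, u⟫) ∂μ ∂ν :=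
        key _ (hX.sub hY)
    _ ≤ ∫⁻ u, ∫⁻ ω, ENNReal.ofReal (1 - Real.cos ⟪X ω + Y ω, u⟫) ∂μ ∂ν :=
        lintegral_mono keyu
    _ = ∫⁻ ω, ENNReal.ofReal (ψ (X ω + Y ω)) ∂μ := (key _ (hX.add hY)).symm
end

section
/- Let ψ(ξ) = ∫_{ℝⁿ∖{0}} (1 - cos⟨ξ,u⟩) ν(du) with ν a Lévy measure, let X₁,…,X_{2m} be i.i.d. ℝⁿ-valued random vectors, and let ε₁,…,ε_{2m} ∈ {−1,+1} be constants with ∑εⱼ = 0. Then E ψ(∑ εⱼ Xⱼ) ≤ E ψ(∑ Xⱼ). -/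
open MeasureTheory ProbabilityTheory
open scoped ENNReal RealInnerProductSpace

lemma aux_re (x y : ℝ) : ((x : ℂ) + (y : ℂ) * Complex.I).re = x := by simp

lemma aux_one_sub_cos_le (t : ℝ) : 1 - Real.cos t ≤ 2 * min (t ^ 2) 1 := by
  have h2 : 1 - Real.cos t ≤ 2 := by nlinarith [Real.neg_one_le_cos t]
  have hsq : Real.sin (t / 2) ^ 2 ≤ (t / 2) ^ 2 := Real.sin_sq_le_sq
  have hcos : Real.cos t = 2 * Real.cos (t / 2) ^ 2 - 1 := by
    have h := Real.cos_two_mul (t / 2)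
    have ht : 2 * (t / 2) = t := by ring
    rw [ht] at h
    exact h
  have hpyth : Real.sin (t / 2) ^ 2 + Real.cos (t / 2) ^ 2 = 1 := Real.sin_sq_add_cos_sq _
  rcases le_total (t ^ 2) 1 with h | h
  · rw [min_eq_left h]; nlinarith [sq_nonneg t]
  · rw [min_eq_right h]; linarith

lemma aux_iIndepFun_congr {Ω : Type*} [MeasurableSpace Ω] {μ : Measure Ω}
    {ι : Type*} [Countable ι] {β : Type*} {mβ : MeasurableSpace β} {f g : ι → Ω → β}
    (h : iIndepFun (m := fun _ => mβ) f μ) (h' : ∀ i, f i =ᵐ[μ] g i) :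
    iIndepFun (m := fun _ => mβ) g μ := by
  rw [iIndepFun_iff_measure_inter_preimage_eq_mul] at h ⊢
  intro S sets hsets
  have hae : ∀ᵐ ω ∂μ, ∀ i, f i ω = g i ω := ae_all_iff.2 h'
  have h1 : μ (⋂ i ∈ S, g i ⁻¹' sets i) = μ (⋂ i ∈ S, f i ⁻¹' sets i) := by
    refine measure_congr (Filter.eventuallyEq_set.2 ?_)
    filter_upwards [hae] with ω hω
    simp only [Set.mem_iInter, Set.mem_preimage]
    constructor <;> intro h'' i hi
    · rw [hω i]; exact h'' i hi
    · rw [← hω i]; exact h'' i hi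
  have h2 : ∀ i, μ (g i ⁻¹' sets i) = μ (f i ⁻¹' sets i) := fun i =>
    measure_congr (Filter.eventuallyEq_set.2 ((h' i).mono fun ω hω => by
      simp only [Set.mem_preimage, hω]))
  rw [h1, h S hsets]
  exact Finset.prod_congr rfl fun i _ => (h2 i).symm

lemma aux_trig_prod {Ω : Type*} [MeasurableSpace Ω] {μ : Measure Ω} [IsProbabilityMeasure μ]
    {ι : Type*} {Y : ι → Ω → ℝ} (hmeas : ∀ j, Measurable (Y j))
    (hindep : iIndepFun Y μ) (s : Finset ι) :
    ((∫ ω, Real.cos (∑ j ∈ s, Y j ω) ∂μ : ℝ) : ℂ)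
        + ((∫ ω, Real.sin (∑ j ∈ s, Y j ω) ∂μ : ℝ) : ℂ) * Complex.I
      = ∏ j ∈ s, (((∫ ω, Real.cos (Y j ω) ∂μ : ℝ) : ℂ)
        + ((∫ ω, Real.sin (Y j ω) ∂μ : ℝ) : ℂ) * Complex.I) := by
  classical
  induction s using Finset.induction_on with
  | empty => simp
  | @insert j s hj ih =>
    have hT : Measurable (fun ω => ∑ i ∈ s, Y i ω) :=
      Finset.measurable_sum s fun i _ => hmeas i
    have hsum_eq : (∑ i ∈ s, Y i) = fun ω => ∑ i ∈ s, Y i ω := by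
      funext ω; simp [Finset.sum_apply]
    have hIF : IndepFun (Y j) (fun ω => ∑ i ∈ s, Y i ω) μ := by
      have h := (hindep.indepFun_finsetSum_of_notMem hmeas hj).symm
      rwa [hsum_eq] at h
    have hint : ∀ (f : Ω → ℝ), Measurable f → (∀ ω, |f ω| ≤ 1) → Integrable f μ := fun f hf hb =>
      (integrable_const (1 : ℝ)).mono' hf.aestronglyMeasurable
        (ae_of_all _ fun ω => by simpa [Real.norm_eq_abs] using hb ω)
    have hcc : IndepFun (fun ω => Real.cos (Y j ω)) (fun ω => Real.cos (∑ i ∈ s, Y i ω)) μ :=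
      hIF.comp Real.measurable_cos Real.measurable_cos
    have hss : IndepFun (fun ω => Real.sin (Y j ω)) (fun ω => Real.sin (∑ i ∈ s, Y i ω)) μ :=
      hIF.comp Real.measurable_sin Real.measurable_sin
    have hsc : IndepFun (fun ω => Real.sin (Y j ω)) (fun ω => Real.cos (∑ i ∈ s, Y i ω)) μ :=
      hIF.comp Real.measurable_sin Real.measurable_cos
    have hcs : IndepFun (fun ω => Real.cos (Y j ω)) (fun ω => Real.sin (∑ i ∈ s, Y i ω)) μ :=
      hIF.comp Real.measurable_cos Real.measurable_sin
    have hm1 : Measurable (fun ω => Real.cos (Y j ω)) := Real.measurable_cos.comp (hmeas j)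
    have hm2 : Measurable (fun ω => Real.cos (∑ i ∈ s, Y i ω)) := Real.measurable_cos.comp hT
    have hm3 : Measurable (fun ω => Real.sin (Y j ω)) := Real.measurable_sin.comp (hmeas j)
    have hm4 : Measurable (fun ω => Real.sin (∑ i ∈ s, Y i ω)) := Real.measurable_sin.comp hT
    have hb1 : ∀ ω, |Real.cos (Y j ω) * Real.cos (∑ i ∈ s, Y i ω)| ≤ 1 := fun ω => by
      rw [abs_mul]
      exact mul_le_one₀ (Real.abs_cos_le_one _) (abs_nonneg _) (Real.abs_cos_le_one _)
    have hb2 : ∀ ω, |Real.sin (Y j ω) * Real.sin (∑ i ∈ s, Y i ω)| ≤ 1 := fun ω => by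
      rw [abs_mul]
      exact mul_le_one₀ (Real.abs_sin_le_one _) (abs_nonneg _) (Real.abs_sin_le_one _)
    have hb3 : ∀ ω, |Real.sin (Y j ω) * Real.cos (∑ i ∈ s, Y i ω)| ≤ 1 := fun ω => by
      rw [abs_mul]
      exact mul_le_one₀ (Real.abs_sin_le_one _) (abs_nonneg _) (Real.abs_cos_le_one _)
    have hb4 : ∀ ω, |Real.cos (Y j ω) * Real.sin (∑ i ∈ s, Y i ω)| ≤ 1 := fun ω => by
      rw [abs_mul]
      exact mul_le_one₀ (Real.abs_cos_le_one _) (abs_nonneg _) (Real.abs_sin_le_one _)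
    have key_cos : ∫ ω, Real.cos (Y j ω + ∑ i ∈ s, Y i ω) ∂μ
        = (∫ ω, Real.cos (Y j ω) ∂μ) * (∫ ω, Real.cos (∑ i ∈ s, Y i ω) ∂μ)
          - (∫ ω, Real.sin (Y j ω) ∂μ) * (∫ ω, Real.sin (∑ i ∈ s, Y i ω) ∂μ) := by
      simp_rw [Real.cos_add]
      rw [integral_sub (hint (fun ω => _ * _) (hm1.mul hm2) hb1) (hint (fun ω => _ * _) (hm3.mul hm4) hb2)]
      have hcc' : ∫ ω, Real.cos (Y j ω) * Real.cos (∑ i ∈ s, Y i ω) ∂μ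
          = (∫ ω, Real.cos (Y j ω) ∂μ) * (∫ ω, Real.cos (∑ i ∈ s, Y i ω) ∂μ) :=
        hcc.integral_fun_mul_eq_mul_integral hm1.aestronglyMeasurable hm2.aestronglyMeasurable
      have hss' : ∫ ω, Real.sin (Y j ω) * Real.sin (∑ i ∈ s, Y i ω) ∂μ
          = (∫ ω, Real.sin (Y j ω) ∂μ) * (∫ ω, Real.sin (∑ i ∈ s, Y i ω) ∂μ) :=
        hss.integral_fun_mul_eq_mul_integral hm3.aestronglyMeasurable hm4.aestronglyMeasurable
      rw [hcc', hss']
    have key_sin : ∫ ω, Real.sin (Y j ω + ∑ i ∈ s, Y i ω) ∂μ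
        = (∫ ω, Real.sin (Y j ω) ∂μ) * (∫ ω, Real.cos (∑ i ∈ s, Y i ω) ∂μ)
          + (∫ ω, Real.cos (Y j ω) ∂μ) * (∫ ω, Real.sin (∑ i ∈ s, Y i ω) ∂μ) := by
      simp_rw [Real.sin_add]
      rw [integral_add (hint (fun ω => _ * _) (hm3.mul hm2) hb3) (hint (fun ω => _ * _) (hm1.mul hm4) hb4)]
      have hsc' : ∫ ω, Real.sin (Y j ω) * Real.cos (∑ i ∈ s, Y i ω) ∂μ
          = (∫ ω, Real.sin (Y j ω) ∂μ) * (∫ ω, Real.cos (∑ i ∈ s, Y i ω) ∂μ) :=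
        hsc.integral_fun_mul_eq_mul_integral hm3.aestronglyMeasurable hm2.aestronglyMeasurable
      have hcs' : ∫ ω, Real.cos (Y j ω) * Real.sin (∑ i ∈ s, Y i ω) ∂μ
          = (∫ ω, Real.cos (Y j ω) ∂μ) * (∫ ω, Real.sin (∑ i ∈ s, Y i ω) ∂μ) :=
        hcs.integral_fun_mul_eq_mul_integral hm1.aestronglyMeasurable hm4.aestronglyMeasurable
      rw [hsc', hcs']
    rw [Finset.prod_insert hj, ← ih]
    simp only [Finset.sum_insert hj]
    rw [key_cos, key_sin]
    simp only [Complex.ext_iff, Complex.add_re, Complex.add_im, Complex.mul_re, Complex.mul_im,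
      Complex.ofReal_re, Complex.ofReal_im, Complex.I_re, Complex.I_im, Complex.ofReal_sub,
      Complex.ofReal_add, Complex.ofReal_mul, Complex.sub_re, Complex.sub_im]
    constructor <;> ring

theorem negdef_exp_ineq_signs
    {Ω : Type*} [MeasurableSpace Ω] {μ : Measure Ω} [IsProbabilityMeasure μ]
    (n : ℕ) (ν : Measure (EuclideanSpace ℝ (Fin n)))
    (hν0 : ν {0} = 0)
    (hν : ∫⁻ u, ENNReal.ofReal (min (‖u‖ ^ 2) 1) ∂ν < ∞)
    (ψ : EuclideanSpace ℝ (Fin n) → ℝ)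
    (hψ : ∀ ξ, ψ ξ = ∫ u, (1 - Real.cos ⟪ξ, u⟫) ∂ν)
    (m : ℕ)
    (X : Fin (2 * m) → Ω → EuclideanSpace ℝ (Fin n))
    (hindep : iIndepFun X μ)
    (hid : ∀ j k, IdentDistrib (X j) (X k) μ μ)
    (ε : Fin (2 * m) → ℝ)
    (hε : ∀ j, ε j = 1 ∨ ε j = -1)
    (hsum : ∑ j, ε j = 0) :
    ∫⁻ ω, ENNReal.ofReal (ψ (∑ j, ε j • X j ω)) ∂μ
      ≤ ∫⁻ ω, ENNReal.ofReal (ψ (∑ j, X j ω)) ∂μ := by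
  classical
  -- trivial case m = 0
  rcases Nat.eq_zero_or_pos m with rfl | hm
  · have h0 : ∀ ω : Ω, (∑ j, ε j • X j ω) = (∑ j, X j ω) := by
      intro ω
      haveI : IsEmpty (Fin (2 * 0)) := ⟨fun j => absurd j.isLt (by omega)⟩
      have : (Finset.univ : Finset (Fin (2 * 0))) = ∅ := Finset.univ_eq_empty
      rw [this, Finset.sum_empty, Finset.sum_empty]
    simp only [h0]
    exact le_rfl
  -- measurable modifications
  have hXae : ∀ j, AEMeasurable (X j) μ := fun j => (hid j j).aemeasurable_fst
  set X' : Fin (2 * m) → Ω → EuclideanSpace ℝ (Fin n) := fun j => (hXae j).mk (X j) with hX'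
  have hX'm : ∀ j, Measurable (X' j) := fun j => (hXae j).measurable_mk
  have haeX : ∀ j, X j =ᵐ[μ] X' j := fun j => (hXae j).ae_eq_mk
  have hindep' : iIndepFun X' μ := aux_iIndepFun_congr hindep haeX
  have hid' : ∀ j k, IdentDistrib (X' j) (X' k) μ μ := fun j k =>
    ⟨(hX'm j).aemeasurable, (hX'm k).aemeasurable, by
      rw [← Measure.map_congr (haeX j), ← Measure.map_congr (haeX k)]
      exact (hid j k).map_eq⟩
  -- basic integrability facts on ν
  have hmin_meas : Measurable (fun u : EuclideanSpace ℝ (Fin n) => min (‖u‖ ^ 2) 1) :=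
    (measurable_norm.pow_const 2).min measurable_const
  have hmin_int : Integrable (fun u : EuclideanSpace ℝ (Fin n) => min (‖u‖ ^ 2) 1) ν := by
    refine ⟨hmin_meas.aestronglyMeasurable, ?_⟩
    rw [hasFiniteIntegral_iff_ofReal (ae_of_all _ fun u => le_min (by positivity) one_pos.le)]
    exact hν
  -- sigma-finiteness of ν
  haveI : SigmaFinite ν := by
    refine ⟨⟨⟨fun k => {u : EuclideanSpace ℝ (Fin n) | 1 / (k + 1 : ℝ) ≤ ‖u‖} ∪ {0}, fun _ => trivial,
      fun k => ?_, ?_⟩⟩⟩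
    · have hkpos : (0 : ℝ) < 1 / (k + 1 : ℝ) := by positivity
      set c : ℝ≥0∞ := ENNReal.ofReal (min ((1 / (k + 1 : ℝ)) ^ 2) 1) with hc
      have hc0 : c ≠ 0 := by
        rw [hc]
        simp only [ne_eq, ENNReal.ofReal_eq_zero, not_le]
        exact lt_min (by positivity) one_pos
      have hsub : {u : EuclideanSpace ℝ (Fin n) | 1 / (k + 1 : ℝ) ≤ ‖u‖}
          ⊆ {u : EuclideanSpace ℝ (Fin n) | c ≤ ENNReal.ofReal (min (‖u‖ ^ 2) 1)} := by
        intro u hu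
        simp only [Set.mem_setOf_eq] at hu ⊢
        exact ENNReal.ofReal_le_ofReal
          (min_le_min (by nlinarith [norm_nonneg u]) le_rfl)
      have hb := mul_meas_ge_le_lintegral₀ (μ := ν)
        ((ENNReal.measurable_ofReal.comp hmin_meas).aemeasurable) c
      simp only [Function.comp] at hb
      have hfin : ν {u : EuclideanSpace ℝ (Fin n) | c ≤ ENNReal.ofReal (min (‖u‖ ^ 2) 1)} < ∞ := by
        by_contra hcon
        rw [not_lt, top_le_iff] at hcon
        rw [hcon, ENNReal.mul_top hc0] at hb
        exact absurd (lt_of_le_of_lt hb hν) (lt_irrefl _)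
      calc ν ({u : EuclideanSpace ℝ (Fin n) | 1 / (k + 1 : ℝ) ≤ ‖u‖} ∪ {0})
          ≤ ν {u : EuclideanSpace ℝ (Fin n) | 1 / (k + 1 : ℝ) ≤ ‖u‖} + ν {0} := measure_union_le _ _
        _ = ν {u : EuclideanSpace ℝ (Fin n) | 1 / (k + 1 : ℝ) ≤ ‖u‖} := by rw [hν0, add_zero]
        _ ≤ ν {u : EuclideanSpace ℝ (Fin n) | c ≤ ENNReal.ofReal (min (‖u‖ ^ 2) 1)} := measure_mono hsub
        _ < ∞ := hfin
    · ext u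
      simp only [Set.mem_iUnion, Set.mem_union, Set.mem_setOf_eq, Set.mem_singleton_iff,
        Set.mem_univ, iff_true]
      by_cases hu : u = 0
      · exact ⟨0, Or.inr hu⟩
      · have hnorm : 0 < ‖u‖ := norm_pos_iff.2 hu
        obtain ⟨k, hk⟩ := exists_nat_ge (1 / ‖u‖)
        refine ⟨k, Or.inl ?_⟩
        rw [div_le_iff₀ (by positivity)]
        have h1 : (1 : ℝ) ≤ k * ‖u‖ := by
          have := (div_le_iff₀ hnorm).1 hk
          linarith
        nlinarith
  -- integrability of the integrand in u, for each ξ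
  have hcos_meas : ∀ ξ : EuclideanSpace ℝ (Fin n), Measurable (fun u : EuclideanSpace ℝ (Fin n) => 1 - Real.cos ⟪ξ, u⟫) := fun ξ =>
    measurable_const.sub (Real.measurable_cos.comp (measurable_const.inner measurable_id))
  have hcos_nn : ∀ (ξ u : EuclideanSpace ℝ (Fin n)), 0 ≤ 1 - Real.cos ⟪ξ, u⟫ := fun ξ u => by
    nlinarith [Real.cos_le_one ⟪ξ, u⟫]
  have hcos_int : ∀ ξ : EuclideanSpace ℝ (Fin n), Integrable (fun u : EuclideanSpace ℝ (Fin n) => 1 - Real.cos ⟪ξ, u⟫) ν := by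
    intro ξ
    refine (hmin_int.const_mul (2 * (‖ξ‖ ^ 2 + 1))).mono'
      (hcos_meas ξ).aestronglyMeasurable (ae_of_all _ fun u => ?_)
    have h1 : 1 - Real.cos ⟪ξ, u⟫ ≤ 2 * min (⟪ξ, u⟫ ^ 2) 1 := aux_one_sub_cos_le _
    have habs := abs_real_inner_le_norm ξ u
    have h3 : |⟪ξ, u⟫| * |⟪ξ, u⟫| ≤ (‖ξ‖ * ‖u‖) * (‖ξ‖ * ‖u‖) :=
      mul_self_le_mul_self (abs_nonneg _) habs
    have h2 : ⟪ξ, u⟫ ^ 2 ≤ (‖ξ‖ ^ 2 + 1) * ‖u‖ ^ 2 := by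
      nlinarith [sq_abs ⟪ξ, u⟫, sq_nonneg ‖u‖]
    have h4 : min (⟪ξ, u⟫ ^ 2) 1 ≤ (‖ξ‖ ^ 2 + 1) * min (‖u‖ ^ 2) 1 := by
      rcases le_total (‖u‖ ^ 2) 1 with hle | hle
      · rw [min_eq_left hle]
        exact le_trans (min_le_left _ _) h2
      · rw [min_eq_right hle]
        calc min (⟪ξ, u⟫ ^ 2) 1 ≤ 1 := min_le_right _ _
          _ ≤ (‖ξ‖ ^ 2 + 1) * 1 := by nlinarith [sq_nonneg ‖ξ‖]
    rw [Real.norm_eq_abs, abs_of_nonneg (hcos_nn ξ u)]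
    calc 1 - Real.cos ⟪ξ, u⟫ ≤ 2 * min (⟪ξ, u⟫ ^ 2) 1 := h1
      _ ≤ 2 * ((‖ξ‖ ^ 2 + 1) * min (‖u‖ ^ 2) 1) := by linarith
      _ = 2 * (‖ξ‖ ^ 2 + 1) * min (‖u‖ ^ 2) 1 := by ring
  have hψe : ∀ ξ : EuclideanSpace ℝ (Fin n), ENNReal.ofReal (ψ ξ)
      = ∫⁻ u, ENNReal.ofReal (1 - Real.cos ⟪ξ, u⟫) ∂ν := by
    intro ξ
    rw [hψ ξ]
    exact ofReal_integral_eq_lintegral_ofReal (hcos_int ξ)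
      (ae_of_all _ fun u => hcos_nn ξ u)
  -- replace X by X' in the goal
  have hae1 : (fun ω => ENNReal.ofReal (ψ (∑ j, ε j • X j ω))) =ᵐ[μ]
      (fun ω => ENNReal.ofReal (ψ (∑ j, ε j • X' j ω))) := by
    filter_upwards [ae_all_iff.2 haeX] with ω hω
    simp only [hω]
  have hae2 : (fun ω => ENNReal.ofReal (ψ (∑ j, X j ω))) =ᵐ[μ]
      (fun ω => ENNReal.ofReal (ψ (∑ j, X' j ω))) := by
    filter_upwards [ae_all_iff.2 haeX] with ω hω
    simp only [hω]
  rw [lintegral_congr_ae hae1, lintegral_congr_ae hae2]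
  -- swap lintegrals
  have swap_eq : ∀ (H : Ω → EuclideanSpace ℝ (Fin n)), Measurable H →
      ∫⁻ ω, ENNReal.ofReal (ψ (H ω)) ∂μ
        = ∫⁻ u, ∫⁻ ω, ENNReal.ofReal (1 - Real.cos ⟪H ω, u⟫) ∂μ ∂ν := by
    intro H hH
    simp_rw [hψe]
    have hmeasp : Measurable (fun p : Ω × EuclideanSpace ℝ (Fin n) => ENNReal.ofReal (1 - Real.cos ⟪H p.1, p.2⟫)) :=
      ENNReal.measurable_ofReal.comp (measurable_const.sub
        (Real.measurable_cos.comp ((hH.comp measurable_fst).inner measurable_snd)))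
    exact lintegral_lintegral_swap hmeasp.aemeasurable
  have hFm : Measurable (fun ω => ∑ j, ε j • X' j ω) :=
    Finset.measurable_sum _ fun j _ => (hX'm j).const_smul (ε j)
  have hGm : Measurable (fun ω => ∑ j, X' j ω) :=
    Finset.measurable_sum _ fun j _ => hX'm j
  rw [swap_eq _ hFm, swap_eq _ hGm]
  refine lintegral_mono fun u => ?_
  -- fixed u : reduce to an inequality of real integrals
  have hint_bdd : ∀ (H : Ω → EuclideanSpace ℝ (Fin n)), Measurable H →
      Integrable (fun ω => 1 - Real.cos ⟪H ω, u⟫) μ := by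
    intro H hH
    refine (integrable_const (2 : ℝ)).mono'
      ((measurable_const.sub (Real.measurable_cos.comp
        (hH.inner measurable_const))).aestronglyMeasurable) (ae_of_all _ fun ω => ?_)
    rw [Real.norm_eq_abs, abs_of_nonneg (hcos_nn _ _)]
    nlinarith [Real.neg_one_le_cos ⟪H ω, u⟫]
  rw [← ofReal_integral_eq_lintegral_ofReal (hint_bdd _ hFm) (ae_of_all _ fun ω => hcos_nn _ _),
    ← ofReal_integral_eq_lintegral_ofReal (hint_bdd _ hGm) (ae_of_all _ fun ω => hcos_nn _ _)]
  apply ENNReal.ofReal_le_ofReal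
  have hint_cos : ∀ (H : Ω → EuclideanSpace ℝ (Fin n)), Measurable H →
      Integrable (fun ω => Real.cos ⟪H ω, u⟫) μ := by
    intro H hH
    refine (integrable_const (1 : ℝ)).mono'
      ((Real.measurable_cos.comp (hH.inner measurable_const)).aestronglyMeasurable)
      (ae_of_all _ fun ω => ?_)
    rw [Real.norm_eq_abs]
    exact Real.abs_cos_le_one _
  rw [integral_sub (integrable_const 1) (hint_cos _ hFm),
    integral_sub (integrable_const 1) (hint_cos _ hGm)]
  apply sub_le_sub_left
  -- the key pointwise inequality:  ∫ cos ⟪∑ X', u⟫ ≤ ∫ cos ⟪∑ ε • X', u⟫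
  set j₀ : Fin (2 * m) := ⟨0, by omega⟩ with hj₀
  set a : ℝ := ∫ ω, Real.cos ⟪X' j₀ ω, u⟫ ∂μ with ha
  set b : ℝ := ∫ ω, Real.sin ⟪X' j₀ ω, u⟫ ∂μ with hb
  have hja : ∀ j, ∫ ω, Real.cos ⟪X' j ω, u⟫ ∂μ = a := fun j =>
    ((hid' j j₀).comp (Real.measurable_cos.comp
      (measurable_id.inner measurable_const))).integral_eq
  have hjb : ∀ j, ∫ ω, Real.sin ⟪X' j ω, u⟫ ∂μ = b := fun j =>
    ((hid' j j₀).comp (Real.measurable_sin.comp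
      (measurable_id.inner measurable_const))).integral_eq
  -- trig product identity for the plain sum
  have hYm : ∀ j, Measurable (fun ω => ⟪X' j ω, u⟫) := fun j =>
    (hX'm j).inner measurable_const
  have hYindep : iIndepFun (fun j (ω : Ω) => ⟪X' j ω, u⟫) μ :=
    hindep'.comp (fun _ (v : EuclideanSpace ℝ (Fin n)) => ⟪v, u⟫) (fun _ => measurable_id.inner measurable_const)
  have hGtrig := aux_trig_prod (μ := μ) hYm hYindep Finset.univ
  -- trig product identity for the signed sum
  have hYεm : ∀ j, Measurable (fun ω => ⟪ε j • X' j ω, u⟫) := fun j =>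
    ((hX'm j).const_smul (ε j)).inner measurable_const
  have hYεindep : iIndepFun (fun j (ω : Ω) => ⟪ε j • X' j ω, u⟫) μ :=
    hindep'.comp (fun j (v : EuclideanSpace ℝ (Fin n)) => ⟪ε j • v, u⟫)
      (fun j => (measurable_id.const_smul (ε j)).inner measurable_const)
  have hFtrig := aux_trig_prod (μ := μ) hYεm hYεindep Finset.univ
  -- identify the factors
  have hFfac : ∀ j : Fin (2 * m),
      (((∫ ω, Real.cos ⟪ε j • X' j ω, u⟫ ∂μ : ℝ) : ℂ)
        + ((∫ ω, Real.sin ⟪ε j • X' j ω, u⟫ ∂μ : ℝ) : ℂ) * Complex.I)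
      = (a : ℂ) + ((ε j : ℝ) : ℂ) * (b : ℂ) * Complex.I := by
    intro j
    rcases hε j with h | h
    · simp only [h, one_smul, hja j, hjb j, Complex.ofReal_one, one_mul]
    · simp only [h, neg_one_smul, inner_neg_left, Real.cos_neg, Real.sin_neg, integral_neg,
        hja j, hjb j, Complex.ofReal_neg, Complex.ofReal_one, neg_mul, one_mul]
  -- counting: exactly m indices have ε j = 1
  set P : Finset (Fin (2 * m)) := Finset.univ.filter (fun j => ε j = 1) with hP
  set Q : Finset (Fin (2 * m)) := Finset.univ.filter (fun j => ¬ ε j = 1) with hQ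
  have hcard2 : P.card + Q.card = 2 * m := by
    rw [hP, hQ, Finset.card_filter_add_card_filter_not]
    simp
  have e1 : ∑ j ∈ P, ε j = (P.card : ℝ) := by
    rw [Finset.sum_congr rfl (fun j hj => (Finset.mem_filter.1 hj).2)]
    simp [hP]
  have e2 : ∑ j ∈ Q, ε j = -(Q.card : ℝ) := by
    rw [Finset.sum_congr rfl (fun j hj =>
      (hε j).resolve_left (Finset.mem_filter.1 hj).2)]
    simp [mul_comm, hQ]
  have hPcard : P.card = m := by
    have hsplit : ∑ j ∈ P, ε j + ∑ j ∈ Q, ε j = 0 := by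
      rw [hP, hQ, Finset.sum_filter_add_sum_filter_not]
      exact hsum
    rw [e1, e2] at hsplit
    have : (P.card : ℝ) = (Q.card : ℝ) := by linarith
    have hPQ : P.card = Q.card := Nat.cast_injective this
    omega
  have hQcard : Q.card = m := by omega
  -- compute the signed product
  have hprodF : ∏ j : Fin (2 * m), ((a : ℂ) + ((ε j : ℝ) : ℂ) * (b : ℂ) * Complex.I)
      = (((a ^ 2 + b ^ 2) ^ m : ℝ) : ℂ) := by
    rw [← Finset.prod_filter_mul_prod_filter_not Finset.univ (fun j => ε j = 1)]
    have hzP : ∏ j ∈ P, ((a : ℂ) + ((ε j : ℝ) : ℂ) * (b : ℂ) * Complex.I)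
        = ((a : ℂ) + (b : ℂ) * Complex.I) ^ m := by
      have hfac : ∀ j ∈ P, ((a : ℂ) + ((ε j : ℝ) : ℂ) * (b : ℂ) * Complex.I)
          = (a : ℂ) + (b : ℂ) * Complex.I := fun j hj => by
        rw [(Finset.mem_filter.1 hj).2]; push_cast; ring
      rw [Finset.prod_congr rfl hfac, Finset.prod_const, hPcard]
    have hzQ : ∏ j ∈ Q, ((a : ℂ) + ((ε j : ℝ) : ℂ) * (b : ℂ) * Complex.I)
        = ((a : ℂ) - (b : ℂ) * Complex.I) ^ m := by
      have hfac : ∀ j ∈ Q, ((a : ℂ) + ((ε j : ℝ) : ℂ) * (b : ℂ) * Complex.I)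
          = (a : ℂ) - (b : ℂ) * Complex.I := fun j hj => by
        rw [(hε j).resolve_left (Finset.mem_filter.1 hj).2]; push_cast; ring
      rw [Finset.prod_congr rfl hfac, Finset.prod_const, hQcard]
    rw [← hP, ← hQ, hzP, hzQ, ← mul_pow]
    have hz : ((a : ℂ) + (b : ℂ) * Complex.I) * ((a : ℂ) - (b : ℂ) * Complex.I)
        = (((a ^ 2 + b ^ 2 : ℝ)) : ℂ) := by
      have hI := Complex.I_sq
      push_cast
      ring_nf
      rw [Complex.I_sq]
      ring
    rw [hz, ← Complex.ofReal_pow]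
  -- conclude the two cosine integral formulas
  have hsumF : ∀ ω : Ω, ∑ j, ⟪ε j • X' j ω, u⟫ = ⟪∑ j, ε j • X' j ω, u⟫ := fun ω =>
    (sum_inner _ _ _).symm
  have hsumG : ∀ ω : Ω, ∑ j, ⟪X' j ω, u⟫ = ⟪∑ j, X' j ω, u⟫ := fun ω =>
    (sum_inner _ _ _).symm
  have hFcos : ∫ ω, Real.cos ⟪∑ j, ε j • X' j ω, u⟫ ∂μ = (a ^ 2 + b ^ 2) ^ m := by
    have h := hFtrig
    rw [Finset.prod_congr rfl (fun j _ => hFfac j), hprodF] at h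
    simp_rw [hsumF] at h
    have h2 := congrArg Complex.re h
    rwa [aux_re, Complex.ofReal_re] at h2
  have hGcos : ∫ ω, Real.cos ⟪∑ j, X' j ω, u⟫ ∂μ
      = ((((a : ℂ) + (b : ℂ) * Complex.I)) ^ (2 * m)).re := by
    have h := hGtrig
    rw [Finset.prod_congr rfl (fun j _ => by rw [hja j, hjb j]),
      Finset.prod_const] at h
    simp_rw [hsumG] at h
    rw [Finset.card_univ, Fintype.card_fin] at h
    have h2 := congrArg Complex.re h
    rwa [aux_re] at h2
  rw [hFcos, hGcos]
  calc ((((a : ℂ) + (b : ℂ) * Complex.I)) ^ (2 * m)).re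
      ≤ ‖(((a : ℂ) + (b : ℂ) * Complex.I)) ^ (2 * m)‖ := Complex.re_le_norm _
    _ = ‖(a : ℂ) + (b : ℂ) * Complex.I‖ ^ (2 * m) := by rw [norm_pow]
    _ = (a ^ 2 + b ^ 2) ^ m := by
        rw [pow_mul, Complex.sq_norm, Complex.normSq_add_mul_I]
end

section
/- Let ψ(ξ) = ⟨Qξ,ξ⟩/2 + ∫_{ℝⁿ∖{0}} (1 - cos⟨ξ,u⟩) ν(du) with Q symmetric positive semidefinite and ν a Lévy measure. Then the kernel K(ξ,η) = ψ(ξ+η) − ψ(ξ−η) is positive definite: for any finite set S ⊂ ℝⁿ and complex numbers (λ_ξ)_{ξ∈S}, ∑_{ξ,η∈S} K(ξ,η) λ_ξ conj(λ_η) ≥ 0. -/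
open MeasureTheory
open scoped ENNReal RealInnerProductSpace Matrix ComplexConjugate

lemma one_sub_cos_le_half_sq (t : ℝ) : 1 - Real.cos t ≤ t ^ 2 / 2 := by
  have e : Real.cos (2 * (t/2)) = 2 * Real.cos (t/2) ^ 2 - 1 := Real.cos_two_mul _
  have p : Real.sin (t/2) ^ 2 + Real.cos (t/2) ^ 2 = 1 := Real.sin_sq_add_cos_sq _
  have hs : Real.sin (t/2) ^ 2 ≤ (t/2) ^ 2 := Real.sin_sq_le_sq
  have ht : (2:ℝ) * (t/2) = t := by ring
  rw [ht] at e
  nlinarith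

lemma quad_expand (n : ℕ) (Q : Matrix (Fin n) (Fin n) ℝ) (hQsymm : Q.IsSymm)
    (ξ η : Fin n → ℝ) :
    (Q.mulVec (ξ + η) ⬝ᵥ (ξ + η)) / 2 - (Q.mulVec (ξ - η) ⬝ᵥ (ξ - η)) / 2
      = 2 * (Q.mulVec ξ ⬝ᵥ η) := by
  have hsym : ∀ a b : Fin n → ℝ, Q.mulVec a ⬝ᵥ b = Q.mulVec b ⬝ᵥ a := by
    intro a b
    rw [dotProduct_comm, Matrix.dotProduct_mulVec, ← Matrix.mulVec_transpose, hQsymm.eq]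
  simp only [Matrix.mulVec_add, Matrix.mulVec_sub, add_dotProduct,
    sub_dotProduct, dotProduct_add, dotProduct_sub]
  rw [hsym η ξ]
  ring

lemma dp_sum_left {ι : Type*} (n : ℕ) (S : Finset ι) (f : ι → (Fin n → ℝ)) (w : Fin n → ℝ) :
    (∑ i ∈ S, f i) ⬝ᵥ w = ∑ i ∈ S, f i ⬝ᵥ w := by
  simp only [dotProduct, Finset.sum_apply, Finset.sum_mul]
  exact Finset.sum_comm

lemma dp_sum_right {ι : Type*} (n : ℕ) (S : Finset ι) (v : Fin n → ℝ) (f : ι → (Fin n → ℝ)) :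
    v ⬝ᵥ (∑ i ∈ S, f i) = ∑ i ∈ S, v ⬝ᵥ f i := by
  simp only [dotProduct, Finset.sum_apply, Finset.mul_sum]
  exact Finset.sum_comm

lemma quad_sum {ι : Type*} (n : ℕ) (Q : Matrix (Fin n) (Fin n) ℝ) (S : Finset ι)
    (x : ι → (Fin n → ℝ)) (c : ι → ℝ) :
    ∑ i ∈ S, ∑ j ∈ S, (Q.mulVec (x i) ⬝ᵥ x j) * c i * c j
      = Q.mulVec (∑ i ∈ S, c i • x i) ⬝ᵥ (∑ j ∈ S, c j • x j) := by
  have h1 : Q.mulVec (∑ i ∈ S, c i • x i) = ∑ i ∈ S, c i • Q.mulVec (x i) := by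
    rw [← Matrix.mulVecLin_apply, map_sum]
    simp [Matrix.mulVecLin_apply, Matrix.mulVec_smul]
  rw [h1, dp_sum_left, Finset.sum_congr rfl]
  intro i _
  rw [smul_dotProduct, dp_sum_right, Finset.smul_sum, Finset.sum_congr rfl]
  intro j _
  rw [dotProduct_smul]
  simp [smul_eq_mul]; ring

theorem kernel_pos_def
    (n : ℕ) (Q : Matrix (Fin n) (Fin n) ℝ) (hQsymm : Q.IsSymm) (hQpsd : Q.PosSemidef)
    (ν : Measure (EuclideanSpace ℝ (Fin n)))
    (hν0 : ν {0} = 0)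
    (hν : ∫⁻ u, ENNReal.ofReal (min (‖u‖ ^ 2) 1) ∂ν < ∞)
    (ψ : EuclideanSpace ℝ (Fin n) → ℝ)
    (hψ : ∀ ξ, ψ ξ = (Q.mulVec ξ ⬝ᵥ ξ) / 2 + ∫ u, (1 - Real.cos ⟪ξ, u⟫) ∂ν)
    (K : EuclideanSpace ℝ (Fin n) → EuclideanSpace ℝ (Fin n) → ℝ)
    (hK : ∀ ξ η, K ξ η = ψ (ξ + η) - ψ (ξ - η))
    (S : Finset (EuclideanSpace ℝ (Fin n)))
    (lam : EuclideanSpace ℝ (Fin n) → ℂ) :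
    0 ≤ (∑ ξ ∈ S, ∑ η ∈ S, (K ξ η : ℂ) * lam ξ * conj (lam η)).re := by
  -- integrability of the dominating function
  have hconst : Integrable (fun u : EuclideanSpace ℝ (Fin n) => min (‖u‖ ^ 2) 1) ν := by
    refine ⟨((continuous_norm.pow 2).min continuous_const).aestronglyMeasurable, ?_⟩
    rw [hasFiniteIntegral_iff_ofReal (Filter.Eventually.of_forall fun u =>
      le_min (sq_nonneg _) zero_le_one)]
    exact hν
  -- integrability of 1 - cos ⟪ξ, ·⟫
  have hg : ∀ ξ : EuclideanSpace ℝ (Fin n), Integrable (fun u : EuclideanSpace ℝ (Fin n) => 1 - Real.cos ⟪ξ, u⟫) ν := by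
    intro ξ
    refine (hconst.const_mul (‖ξ‖ ^ 2 / 2 + 2)).mono
      ((continuous_const.sub (Real.continuous_cos.comp
        (continuous_const.inner continuous_id))).aestronglyMeasurable)
      (Filter.Eventually.of_forall fun u => ?_)
    have hcos : Real.cos ⟪ξ, u⟫ ≤ 1 := Real.cos_le_one _
    have h0 : (0:ℝ) ≤ 1 - Real.cos ⟪ξ, u⟫ := by linarith
    have habs : |⟪ξ, u⟫| ≤ ‖ξ‖ * ‖u‖ := abs_real_inner_le_norm ξ u
    have hsq : ⟪ξ, u⟫ ^ 2 ≤ (‖ξ‖ * ‖u‖) ^ 2 := by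
      have := abs_le.mp habs
      nlinarith
    have hh := one_sub_cos_le_half_sq ⟪ξ, u⟫
    rw [Real.norm_eq_abs, Real.norm_eq_abs, abs_of_nonneg h0]
    rcases le_total (‖u‖ ^ 2) 1 with h | h
    · rw [min_eq_left h, abs_of_nonneg (by positivity)]
      nlinarith [sq_nonneg ‖u‖, norm_nonneg u, norm_nonneg ξ]
    · rw [min_eq_right h, abs_of_nonneg (by positivity)]
      have := Real.neg_one_le_cos ⟪ξ, u⟫
      nlinarith [sq_nonneg ‖ξ‖]
  -- the product of sines
  have hprod : ∀ ξ η : EuclideanSpace ℝ (Fin n), (fun u : EuclideanSpace ℝ (Fin n) => Real.sin ⟪ξ, u⟫ * Real.sin ⟪η, u⟫)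
      = fun u : EuclideanSpace ℝ (Fin n) => ((1 - Real.cos ⟪ξ + η, u⟫) - (1 - Real.cos ⟪ξ - η, u⟫)) / 2 := by
    intro ξ η
    funext u
    rw [inner_add_left, inner_sub_left, Real.cos_add, Real.cos_sub]
    ring
  have hIntss : ∀ ξ η : EuclideanSpace ℝ (Fin n), Integrable (fun u : EuclideanSpace ℝ (Fin n) => Real.sin ⟪ξ, u⟫ * Real.sin ⟪η, u⟫) ν := by
    intro ξ η
    rw [hprod]
    exact ((hg (ξ + η)).sub (hg (ξ - η))).div_const 2
  -- key identity for K
  have hKey : ∀ ξ η : EuclideanSpace ℝ (Fin n), K ξ η = 2 * (Q.mulVec ξ ⬝ᵥ η)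
      + 2 * ∫ u, Real.sin ⟪ξ, u⟫ * Real.sin ⟪η, u⟫ ∂ν := by
    intro ξ η
    have hi : ∫ u, Real.sin ⟪ξ, u⟫ * Real.sin ⟪η, u⟫ ∂ν
        = ((∫ u, (1 - Real.cos ⟪ξ + η, u⟫) ∂ν) - ∫ u, (1 - Real.cos ⟪ξ - η, u⟫) ∂ν) / 2 := by
      rw [hprod ξ η, integral_div, integral_sub (hg _) (hg _)]
    have hq : (Q.mulVec (ξ + η) ⬝ᵥ (ξ + η)) / 2 - (Q.mulVec (ξ - η) ⬝ᵥ (ξ - η)) / 2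
        = 2 * (Q.mulVec ξ ⬝ᵥ η) := quad_expand n Q hQsymm ξ η
    rw [hK, hψ, hψ, hi, WithLp.ofLp_add, WithLp.ofLp_sub]
    linarith
  -- the real quadratic form is nonnegative
  have main_real : ∀ c : EuclideanSpace ℝ (Fin n) → ℝ, 0 ≤ ∑ ξ ∈ S, ∑ η ∈ S, K ξ η * c ξ * c η := by
    intro c
    have split : ∑ ξ ∈ S, ∑ η ∈ S, K ξ η * c ξ * c η
        = 2 * (∑ ξ ∈ S, ∑ η ∈ S, (Q.mulVec ξ ⬝ᵥ η) * c ξ * c η)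
          + 2 * (∑ ξ ∈ S, ∑ η ∈ S, (∫ u, Real.sin ⟪ξ, u⟫ * Real.sin ⟪η, u⟫ ∂ν) * c ξ * c η) := by
      rw [Finset.mul_sum, Finset.mul_sum, ← Finset.sum_add_distrib]
      refine Finset.sum_congr rfl fun ξ _ => ?_
      rw [Finset.mul_sum, Finset.mul_sum, ← Finset.sum_add_distrib]
      refine Finset.sum_congr rfl fun η _ => ?_
      rw [hKey]; ring
    have hA : 0 ≤ ∑ ξ ∈ S, ∑ η ∈ S, (Q.mulVec ξ ⬝ᵥ η) * c ξ * c η := by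
      rw [quad_sum n Q S (fun ξ => ξ) c, dotProduct_comm]
      have h := hQpsd.dotProduct_mulVec_nonneg (∑ i ∈ S, c i • i)
      simpa using h
    have hB : 0 ≤ ∑ ξ ∈ S, ∑ η ∈ S, (∫ u, Real.sin ⟪ξ, u⟫ * Real.sin ⟪η, u⟫ ∂ν) * c ξ * c η := by
      have hFint : ∀ ξ η : EuclideanSpace ℝ (Fin n), Integrable
          (fun u : EuclideanSpace ℝ (Fin n) => (c ξ * c η) * (Real.sin ⟪ξ, u⟫ * Real.sin ⟪η, u⟫)) ν :=
        fun ξ η => (hIntss ξ η).const_mul _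
      have e : ∑ ξ ∈ S, ∑ η ∈ S, (∫ u, Real.sin ⟪ξ, u⟫ * Real.sin ⟪η, u⟫ ∂ν) * c ξ * c η
          = ∫ u, (∑ ξ ∈ S, c ξ * Real.sin ⟪ξ, u⟫) ^ 2 ∂ν := by
        have h2 : (fun u : EuclideanSpace ℝ (Fin n) => (∑ ξ ∈ S, c ξ * Real.sin ⟪ξ, u⟫) ^ 2)
            = fun u : EuclideanSpace ℝ (Fin n) => ∑ ξ ∈ S, ∑ η ∈ S,
                (c ξ * c η) * (Real.sin ⟪ξ, u⟫ * Real.sin ⟪η, u⟫) := by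
          funext u
          rw [sq, Finset.sum_mul_sum]
          exact Finset.sum_congr rfl fun ξ _ => Finset.sum_congr rfl fun η _ => by ring
        rw [h2, integral_finset_sum _ fun ξ _ => integrable_finset_sum _ fun η _ => hFint ξ η]
        refine Finset.sum_congr rfl fun ξ _ => ?_
        rw [integral_finset_sum _ fun η _ => hFint ξ η]
        refine Finset.sum_congr rfl fun η _ => ?_
        rw [integral_const_mul]
        ring
      rw [e]
      exact integral_nonneg fun u => sq_nonneg _
    linarith
  -- reduce the complex statement to the real one
  have hterm : ∀ ξ η : EuclideanSpace ℝ (Fin n), ((K ξ η : ℂ) * lam ξ * conj (lam η)).re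
      = K ξ η * (lam ξ).re * (lam η).re + K ξ η * (lam ξ).im * (lam η).im := by
    intro ξ η
    simp [Complex.mul_re, Complex.mul_im]
  have hre : (∑ ξ ∈ S, ∑ η ∈ S, (K ξ η : ℂ) * lam ξ * conj (lam η)).re
      = (∑ ξ ∈ S, ∑ η ∈ S, K ξ η * (lam ξ).re * (lam η).re)
        + ∑ ξ ∈ S, ∑ η ∈ S, K ξ η * (lam ξ).im * (lam η).im := by
    rw [Complex.re_sum, ← Finset.sum_add_distrib]
    refine Finset.sum_congr rfl fun ξ _ => ?_
    rw [Complex.re_sum, ← Finset.sum_add_distrib]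
    exact Finset.sum_congr rfl fun η _ => hterm ξ η
  rw [hre]
  have h1 := main_real fun ξ => (lam ξ).re
  have h2 := main_real fun ξ => (lam ξ).im
  linarith
end

section
/- For each α ∈ (0,2], the kernel K(ξ,η) = |ξ+η|^α − |ξ−η|^α on ℝ × ℝ is positive definite. -/
open MeasureTheory Set
open scoped ComplexConjugate


open MeasureTheory Set
open scoped ComplexConjugate

lemma myAbsSinLe (x : ℝ) : |Real.sin x| ≤ |x| := by
  rcases le_or_gt 1 |x| with h | h
  · exact (Real.abs_sin_le_one x).trans h
  · have h1 : |Real.sin x| = |Real.sin (|x|)| := by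
      rcases abs_cases x with ⟨h2, _⟩ | ⟨h2, _⟩ <;> rw [h2] <;> simp [Real.sin_neg]
    have hpi : |x| ≤ Real.pi := le_trans h.le (by linarith [Real.pi_gt_three])
    rw [h1, abs_of_nonneg (Real.sin_nonneg_of_nonneg_of_le_pi (abs_nonneg x) hpi)]
    exact Real.sin_le (abs_nonneg x)

lemma myOneSubCos (y : ℝ) : 1 - Real.cos y ≤ y ^ 2 / 2 := by
  have h := Real.sin_sq_eq_half_sub (x := y / 2)
  rw [show 2 * (y / 2) = y by ring] at h
  have h2 : Real.sin (y / 2) ^ 2 ≤ (y / 2) ^ 2 := by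
    have := myAbsSinLe (y / 2)
    nlinarith [abs_nonneg (Real.sin (y / 2)), sq_abs (Real.sin (y / 2)), sq_abs (y / 2)]
  nlinarith

lemma myAlg (k : ℕ) (a : Fin k → ℝ) (lam : Fin k → ℂ) :
    ∑ j, ∑ l, (a j * a l) * (lam j * conj (lam l)).re
      = Complex.normSq (∑ j, (a j : ℂ) * lam j) := by
  have h : ((∑ j, (a j : ℂ) * lam j) * conj (∑ l, (a l : ℂ) * lam l))
      = ∑ j, ∑ l, ((a j * a l : ℝ) : ℂ) * (lam j * conj (lam l)) := by
    rw [map_sum, Finset.sum_mul]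
    refine Finset.sum_congr rfl fun j _ => ?_
    rw [Finset.mul_sum]
    refine Finset.sum_congr rfl fun l _ => ?_
    push_cast
    rw [map_mul, Complex.conj_ofReal]
    ring
  have h2 : Complex.normSq (∑ j, (a j : ℂ) * lam j)
      = ((∑ j, (a j : ℂ) * lam j) * conj (∑ l, (a l : ℂ) * lam l)).re := by
    rw [Complex.mul_conj]; simp
  rw [h2, h, Complex.re_sum]
  refine Finset.sum_congr rfl fun j _ => ?_
  rw [Complex.re_sum]
  exact Finset.sum_congr rfl fun l _ => (Complex.re_ofReal_mul _ _).symm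

lemma myContOn (α x : ℝ) :
    ContinuousOn (fun t : ℝ => (1 - Real.cos (x * t)) * t ^ (-1 - α)) (Ioi 0) := by
  refine ContinuousOn.mul ?_ (continuousOn_id.rpow_const fun t ht => Or.inl (ne_of_gt ht))
  exact (continuous_const.sub (Real.continuous_cos.comp (continuous_mul_left x))).continuousOn

lemma myInteg (α : ℝ) (hα : 0 < α) (hlt : α < 2) (x : ℝ) :
    IntegrableOn (fun t : ℝ => (1 - Real.cos (x * t)) * t ^ (-1 - α)) (Ioi 0) := by
  rw [← Ioc_union_Ioi_eq_Ioi (zero_le_one (α := ℝ))]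
  refine IntegrableOn.union ?_ ?_
  · refine Integrable.mono' (g := fun t : ℝ => (x ^ 2 / 2) * t ^ (1 - α)) ?_ ?_ ?_
    · exact ((intervalIntegrable_iff_integrableOn_Ioc_of_le zero_le_one).mp
        (intervalIntegral.intervalIntegrable_rpow' (by linarith))).const_mul _
    · exact ((myContOn α x).mono Ioc_subset_Ioi_self).aestronglyMeasurable measurableSet_Ioc
    · rw [ae_restrict_iff' measurableSet_Ioc]
      refine ae_of_all _ fun t ht => ?_
      have ht0 : (0 : ℝ) < t := ht.1
      have hw : (0 : ℝ) ≤ t ^ (-1 - α) := Real.rpow_nonneg ht0.le _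
      have key : t ^ (2 : ℕ) * t ^ (-1 - α) = t ^ (1 - α) := by
        rw [← Real.rpow_natCast t 2, ← Real.rpow_add ht0]; congr 1; push_cast; ring
      have hnn : (0 : ℝ) ≤ 1 - Real.cos (x * t) := by linarith [Real.cos_le_one (x * t)]
      calc ‖(1 - Real.cos (x * t)) * t ^ (-1 - α)‖
          = (1 - Real.cos (x * t)) * t ^ (-1 - α) := by
            rw [Real.norm_eq_abs, abs_of_nonneg (mul_nonneg hnn hw)]
        _ ≤ ((x * t) ^ 2 / 2) * t ^ (-1 - α) :=
            mul_le_mul_of_nonneg_right (by linarith [myOneSubCos (x * t)]) hw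
        _ = (x ^ 2 / 2) * (t ^ (2 : ℕ) * t ^ (-1 - α)) := by ring
        _ = (x ^ 2 / 2) * t ^ (1 - α) := by rw [key]
  · refine Integrable.mono' (g := fun t : ℝ => 2 * t ^ (-1 - α)) ?_ ?_ ?_
    · exact (integrableOn_Ioi_rpow_of_lt (by linarith) zero_lt_one).const_mul 2
    · exact ((myContOn α x).mono (Ioi_subset_Ioi zero_le_one)).aestronglyMeasurable
        measurableSet_Ioi
    · rw [ae_restrict_iff' measurableSet_Ioi]
      refine ae_of_all _ fun t ht => ?_
      have ht0 : (0 : ℝ) < t := lt_trans zero_lt_one ht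
      have hw : (0 : ℝ) ≤ t ^ (-1 - α) := Real.rpow_nonneg ht0.le _
      have hnn : (0 : ℝ) ≤ 1 - Real.cos (x * t) := by linarith [Real.cos_le_one (x * t)]
      rw [Real.norm_eq_abs, abs_of_nonneg (mul_nonneg hnn hw)]
      have : 1 - Real.cos (x * t) ≤ 2 := by linarith [Real.neg_one_le_cos (x * t)]
      exact mul_le_mul_of_nonneg_right this hw

lemma myScale (α : ℝ) (hα : 0 < α) (x : ℝ) :
    ∫ t in Ioi (0:ℝ), (1 - Real.cos (x * t)) * t ^ (-1 - α)
      = |x| ^ α * ∫ t in Ioi (0:ℝ), (1 - Real.cos t) * t ^ (-1 - α) := by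
  rcases eq_or_ne x 0 with rfl | hx
  · simp [Real.zero_rpow hα.ne']
  · set b := |x| with hbdef
    have hb : 0 < b := abs_pos.2 hx
    have comp := MeasureTheory.integral_comp_mul_left_Ioi
      (fun s : ℝ => (1 - Real.cos s) * s ^ (-1 - α)) 0 hb
    rw [mul_zero] at comp
    have h2 : b ^ (1 + α) * b ^ (-1 - α) = 1 := by
      rw [← Real.rpow_add hb]; norm_num
    calc ∫ t in Ioi (0:ℝ), (1 - Real.cos (x * t)) * t ^ (-1 - α)
        = ∫ t in Ioi (0:ℝ), b ^ (1 + α) * ((1 - Real.cos (b * t)) * (b * t) ^ (-1 - α)) := by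
          refine setIntegral_congr_fun measurableSet_Ioi fun t ht => ?_
          have ht0 : (0 : ℝ) < t := ht
          have h1 : Real.cos (b * t) = Real.cos (x * t) := by
            rw [show b * t = |x * t| by rw [abs_mul, abs_of_pos ht0], Real.cos_abs]
          rw [h1, Real.mul_rpow hb.le ht0.le]
          linear_combination (-(1 - Real.cos (x * t)) * t ^ (-1 - α)) * h2
      _ = b ^ (1 + α) * (b⁻¹ • ∫ s in Ioi (0:ℝ), (1 - Real.cos s) * s ^ (-1 - α)) := by
          rw [integral_const_mul, comp]
      _ = |x| ^ α * ∫ t in Ioi (0:ℝ), (1 - Real.cos t) * t ^ (-1 - α) := by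
          rw [smul_eq_mul, ← mul_assoc, hbdef]
          congr 1
          rw [← Real.rpow_neg_one b, ← Real.rpow_add hb]
          norm_num
          rfl

lemma myCPos (α : ℝ) (hα : 0 < α) (hlt : α < 2) :
    0 < ∫ t in Ioi (0:ℝ), (1 - Real.cos t) * t ^ (-1 - α) := by
  have hint : IntegrableOn (fun t : ℝ => (1 - Real.cos t) * t ^ (-1 - α)) (Ioi 0) := by
    simpa using myInteg α hα hlt 1
  have hnn : 0 ≤ᵐ[volume.restrict (Ioi (0:ℝ))]
      fun t : ℝ => (1 - Real.cos t) * t ^ (-1 - α) := by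
    refine (ae_restrict_iff' measurableSet_Ioi).2 (ae_of_all _ fun t ht => ?_)
    exact mul_nonneg (by linarith [Real.cos_le_one t]) (Real.rpow_nonneg (le_of_lt ht) _)
  have hsub : Ioc (1:ℝ) 2 ⊆ Ioi 0 := fun t ht => lt_trans zero_lt_one ht.1
  have h1 : ∫ t in Ioc (1:ℝ) 2, (1 - Real.cos t) * t ^ (-1 - α)
      ≤ ∫ t in Ioi (0:ℝ), (1 - Real.cos t) * t ^ (-1 - α) :=
    setIntegral_mono_set hint hnn (HasSubset.Subset.eventuallyLE hsub)
  have h2 : ∫ t in Ioc (1:ℝ) 2, ((1/3) * (2:ℝ) ^ (-1 - α)) ≤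
      ∫ t in Ioc (1:ℝ) 2, (1 - Real.cos t) * t ^ (-1 - α) := by
    refine setIntegral_mono_on (integrableOn_const measure_Ioc_lt_top.ne)
      (hint.mono_set hsub) measurableSet_Ioc fun t ht => ?_
    have ht0 : (0:ℝ) < t := lt_trans zero_lt_one ht.1
    have hcos : Real.cos t ≤ 2/3 := by
      have h3 : Real.cos t ≤ Real.cos 1 :=
        Real.cos_le_cos_of_nonneg_of_le_pi zero_le_one
          (le_trans ht.2 (by linarith [Real.pi_gt_three])) ht.1.le
      exact h3.trans (Real.cos_one_le.trans (by norm_num))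
    have hr : (2:ℝ) ^ (-1 - α) ≤ t ^ (-1 - α) :=
      Real.rpow_le_rpow_of_nonpos ht0 ht.2 (by linarith)
    exact mul_le_mul (by linarith) hr (Real.rpow_nonneg (by norm_num) _) (by linarith)
  have h3 : (0:ℝ) < ∫ t in Ioc (1:ℝ) 2, ((1/3) * (2:ℝ) ^ (-1 - α)) := by
    rw [setIntegral_const]
    simp only [Real.volume_real_Ioc, smul_eq_mul]
    rw [show (2:ℝ) - 1 = 1 by norm_num]
    simp only [max_eq_left zero_le_one, one_mul]
    positivity
  linarith

lemma myPair (α : ℝ) (hα : 0 < α) (hlt : α < 2) (x y : ℝ) :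
    IntegrableOn (fun t : ℝ => (2 * Real.sin (x * t) * Real.sin (y * t)) * t ^ (-1 - α)) (Ioi 0) ∧
    ∫ t in Ioi (0:ℝ), (2 * Real.sin (x * t) * Real.sin (y * t)) * t ^ (-1 - α)
      = (|x + y| ^ α - |x - y| ^ α) *
        ∫ t in Ioi (0:ℝ), (1 - Real.cos t) * t ^ (-1 - α) := by
  have hfun : (fun t : ℝ => (2 * Real.sin (x * t) * Real.sin (y * t)) * t ^ (-1 - α))
      = fun t : ℝ => (1 - Real.cos ((x + y) * t)) * t ^ (-1 - α)
          - (1 - Real.cos ((x - y) * t)) * t ^ (-1 - α) := by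
    funext t
    rw [show (x - y) * t = x * t - y * t by ring, show (x + y) * t = x * t + y * t by ring,
      Real.cos_sub, Real.cos_add]
    ring
  constructor
  · rw [hfun]; exact (myInteg α hα hlt (x + y)).sub (myInteg α hα hlt (x - y))
  · rw [hfun, integral_sub (myInteg α hα hlt (x + y)) (myInteg α hα hlt (x - y)),
      myScale α hα (x + y), myScale α hα (x - y)]
    ring

theorem abs_pow_kernel_pos_def
    (α : ℝ) (hα : 0 < α) (hα2 : α ≤ 2)
    (K : ℝ → ℝ → ℝ) (hK : ∀ ξ η, K ξ η = |ξ + η| ^ α - |ξ - η| ^ α)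
    (k : ℕ) (ξ : Fin k → ℝ) (lam : Fin k → ℂ) :
    0 ≤ (∑ j, ∑ l, (K (ξ j) (ξ l) : ℂ) * lam j * conj (lam l)).re := by
  have hre : (∑ j, ∑ l, (K (ξ j) (ξ l) : ℂ) * lam j * conj (lam l)).re
      = ∑ j, ∑ l, K (ξ j) (ξ l) * (lam j * conj (lam l)).re := by
    rw [Complex.re_sum]
    refine Finset.sum_congr rfl fun j _ => ?_
    rw [Complex.re_sum]
    refine Finset.sum_congr rfl fun l _ => ?_
    rw [mul_assoc, Complex.re_ofReal_mul]
  rw [hre]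
  rcases eq_or_lt_of_le hα2 with heq | hlt
  · -- α = 2
    have hK4 : ∀ a b : ℝ, K a b = (2 * a) * (2 * b) := by
      intro a b
      rw [hK, heq, show ((2:ℝ) = ((2:ℕ):ℝ)) by norm_num, Real.rpow_natCast, Real.rpow_natCast,
        sq_abs, sq_abs]
      ring
    simp only [hK4]
    have := myAlg k (fun j => 2 * ξ j) lam
    rw [this]
    exact Complex.normSq_nonneg _
  · -- α < 2
    set c := ∫ t in Ioi (0:ℝ), (1 - Real.cos t) * t ^ (-1 - α) with hc
    have hcpos := myCPos α hα hlt
    rw [← hc] at hcpos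
    have hint : ∀ j l : Fin k, Integrable
        (fun t : ℝ => (lam j * conj (lam l)).re *
          ((2 * Real.sin (ξ j * t) * Real.sin (ξ l * t)) * t ^ (-1 - α)))
        (volume.restrict (Ioi 0)) :=
      fun j l => ((myPair α hα hlt (ξ j) (ξ l)).1).const_mul _
    have key : (∑ j, ∑ l, K (ξ j) (ξ l) * (lam j * conj (lam l)).re) * c
        = ∫ t in Ioi (0:ℝ), ∑ j, ∑ l, (lam j * conj (lam l)).re *
            ((2 * Real.sin (ξ j * t) * Real.sin (ξ l * t)) * t ^ (-1 - α)) := by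
      rw [integral_finset_sum _ fun j _ => integrable_finset_sum _ fun l _ => hint j l]
      rw [Finset.sum_mul]
      refine Finset.sum_congr rfl fun j _ => ?_
      rw [integral_finset_sum _ fun l _ => hint j l, Finset.sum_mul]
      refine Finset.sum_congr rfl fun l _ => ?_
      rw [integral_const_mul, (myPair α hα hlt (ξ j) (ξ l)).2, ← hc, hK]
      ring
    have keynn : 0 ≤ (∑ j, ∑ l, K (ξ j) (ξ l) * (lam j * conj (lam l)).re) * c := by
      rw [key]
      refine setIntegral_nonneg measurableSet_Ioi fun t ht => ?_
      have halg := myAlg k (fun j => Real.sin (ξ j * t)) lam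
      have hstep : ∑ j, ∑ l, (lam j * conj (lam l)).re *
            ((2 * Real.sin (ξ j * t) * Real.sin (ξ l * t)) * t ^ (-1 - α))
          = 2 * t ^ (-1 - α) *
            Complex.normSq (∑ j, (Real.sin (ξ j * t) : ℂ) * lam j) := by
        rw [← halg, Finset.mul_sum]
        refine Finset.sum_congr rfl fun j _ => ?_
        rw [Finset.mul_sum]
        refine Finset.sum_congr rfl fun l _ => ?_
        ring
      rw [hstep]
      exact mul_nonneg (mul_nonneg (by norm_num) (Real.rpow_nonneg (le_of_lt ht) _))
        (Complex.normSq_nonneg _)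
    exact (mul_nonneg_iff_of_pos_right hcpos).mp keynn
end

section
/- Let X, Y be i.i.d. bounded real random variables with essential supremum M and essential infimum m. Then the essential supremum of |X−Y| equals M − m, which is at most 2·max{|M|,|m|}, which equals the essential supremum of |X+Y|. In particular ‖X−Y‖_∞ ≤ ‖X+Y‖_∞. -/
open MeasureTheory ProbabilityTheory

private lemma meas_gt_ne_zero' {Ω : Type*} [MeasurableSpace Ω] {μ : Measure Ω}
    {f : Ω → ℝ} {c : ℝ} (hcob : Filter.IsCoboundedUnder (· ≤ ·) (ae μ) f)
    (h : c < essSup f μ) : μ {ω | c < f ω} ≠ 0 := by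
  intro h0
  have hae : ∀ᵐ ω ∂μ, f ω ≤ c := by
    rw [ae_iff]; simpa only [not_le] using h0
  have : essSup f μ ≤ c := Filter.limsup_le_of_le hcob hae
  exact absurd this (not_le.mpr h)

private lemma meas_lt_ne_zero' {Ω : Type*} [MeasurableSpace Ω] {μ : Measure Ω}
    {f : Ω → ℝ} {c : ℝ} (hcob : Filter.IsCoboundedUnder (· ≥ ·) (ae μ) f)
    (h : essInf f μ < c) : μ {ω | f ω < c} ≠ 0 := by
  intro h0
  have hae : ∀ᵐ ω ∂μ, c ≤ f ω := by
    rw [ae_iff]; simpa only [not_le] using h0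
  have : c ≤ essInf f μ := Filter.le_liminf_of_le hcob hae
  exact absurd this (not_le.mpr h)

private lemma essSup_le'' {Ω : Type*} [MeasurableSpace Ω] {μ : Measure Ω}
    {f : Ω → ℝ} {c : ℝ} (hcob : Filter.IsCoboundedUnder (· ≤ ·) (ae μ) f)
    (h : ∀ᵐ ω ∂μ, f ω ≤ c) : essSup f μ ≤ c :=
  Filter.limsup_le_of_le hcob h

theorem essSup_diff_le_essSup_sum
    {Ω : Type*} [MeasurableSpace Ω] {μ : Measure Ω} [IsProbabilityMeasure μ]
    (X Y : Ω → ℝ) (hXm : Measurable X) (hYm : Measurable Y)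
    (hindep : IndepFun X Y μ) (hid : IdentDistrib X Y μ μ)
    (hbdd : MemLp X ⊤ μ)
    (M m : ℝ) (hM : M = essSup X μ) (hm : m = essInf X μ) :
    essSup (fun ω => |X ω - Y ω|) μ = M - m
      ∧ M - m ≤ 2 * max |M| |m|
      ∧ essSup (fun ω => |X ω + Y ω|) μ = 2 * max |M| |m|
      ∧ essSup (fun ω => |X ω - Y ω|) μ ≤ essSup (fun ω => |X ω + Y ω|) μ := by
  -- a.e. bound on |X|
  obtain ⟨C, hC⟩ : ∃ C : ℝ, ∀ᵐ ω ∂μ, |X ω| ≤ C := by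
    have h := hbdd.2
    rw [eLpNorm_exponent_top, eLpNormEssSup_lt_top_iff_isBoundedUnder] at h
    obtain ⟨C, hC⟩ := h
    refine ⟨C, ?_⟩
    filter_upwards [Filter.eventually_map.mp hC] with ω h
    have : ‖X ω‖ ≤ (C : ℝ) := by exact_mod_cast h
    simpa [Real.norm_eq_abs] using this
  have hbddA : Filter.IsBoundedUnder (· ≤ ·) (ae μ) X :=
    ⟨C, Filter.eventually_map.mpr <| hC.mono fun ω h => (le_abs_self _).trans h⟩
  have hbddB : Filter.IsBoundedUnder (· ≥ ·) (ae μ) X :=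
    ⟨-C, Filter.eventually_map.mpr <| hC.mono fun ω h => by
      have := neg_abs_le (X ω); simp only [ge_iff_le]; linarith⟩
  -- a.e. bounds on X
  have hXle : ∀ᵐ ω ∂μ, X ω ≤ M := hM ▸ ae_le_essSup hbddA
  have hXge : ∀ᵐ ω ∂μ, m ≤ X ω := hm ▸ ae_essInf_le hbddB
  -- transfer preimage measures
  have hpre : ∀ s : Set ℝ, MeasurableSet s → μ (X ⁻¹' s) = μ (Y ⁻¹' s) :=
    fun s hs => hid.measure_mem_eq hs
  -- a.e. bounds on Y
  have hYle : ∀ᵐ ω ∂μ, Y ω ≤ M := by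
    rw [ae_iff]
    have h0 : μ {ω | ¬ X ω ≤ M} = 0 := by rw [← ae_iff]; exact hXle
    have : μ (X ⁻¹' Set.Ioi M) = μ (Y ⁻¹' Set.Ioi M) := hpre _ measurableSet_Ioi
    simp only [not_le]
    have e1 : {ω | M < X ω} = X ⁻¹' Set.Ioi M := rfl
    have e2 : {ω | M < Y ω} = Y ⁻¹' Set.Ioi M := rfl
    rw [e2, ← this, ← e1]
    simpa only [not_le] using h0
  have hYge : ∀ᵐ ω ∂μ, m ≤ Y ω := by
    rw [ae_iff]
    have h0 : μ {ω | ¬ m ≤ X ω} = 0 := by rw [← ae_iff]; exact hXge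
    have : μ (X ⁻¹' Set.Iio m) = μ (Y ⁻¹' Set.Iio m) := hpre _ measurableSet_Iio
    simp only [not_le]
    have e1 : {ω | X ω < m} = X ⁻¹' Set.Iio m := rfl
    have e2 : {ω | Y ω < m} = Y ⁻¹' Set.Iio m := rfl
    rw [e2, ← this, ← e1]
    simpa only [not_le] using h0
  -- m ≤ M
  have hne : (ae μ).NeBot := ae_neBot.mpr (IsProbabilityMeasure.ne_zero μ)
  have hcobX : Filter.IsCoboundedUnder (· ≤ ·) (ae μ) X :=
    hbddB.isCoboundedUnder_le
  have hcobX' : Filter.IsCoboundedUnder (· ≥ ·) (ae μ) X :=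
    hbddA.isCoboundedUnder_ge
  have hmM : m ≤ M := by
    obtain ⟨ω, h1, h2⟩ := (hXle.and hXge).exists
    linarith
  -- max |M| |m| = max M (-m)
  have hK : max |M| |m| = max M (-m) := by
    apply le_antisymm
    · apply max_le
      · exact abs_le.mpr ⟨by
          have := le_max_right M (-m); linarith, le_max_left _ _⟩
      · exact abs_le.mpr ⟨by
          have := le_max_right M (-m); linarith, by
          have := le_max_left M (-m); linarith⟩
    · exact max_le ((le_abs_self M).trans (le_max_left _ _))
        ((neg_le_abs m).trans (le_max_right _ _))
  set K := max M (-m) with hKdef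
  have hMK : M ≤ K := le_max_left _ _
  have hmK : -K ≤ m := by have := le_max_right M (-m); linarith
  -- upper bound for |X - Y|
  have hub1 : ∀ᵐ ω ∂μ, |X ω - Y ω| ≤ M - m := by
    filter_upwards [hXle, hXge, hYle, hYge] with ω h1 h2 h3 h4
    exact abs_le.mpr ⟨by linarith, by linarith⟩
  -- upper bound for |X + Y|
  have hub2 : ∀ᵐ ω ∂μ, |X ω + Y ω| ≤ 2 * K := by
    filter_upwards [hXle, hXge, hYle, hYge] with ω h1 h2 h3 h4
    exact abs_le.mpr ⟨by linarith, by linarith⟩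
  -- independence of products of events
  have hcobD : Filter.IsCoboundedUnder (· ≤ ·) (ae μ) (fun ω => |X ω - Y ω|) :=
    Filter.isCoboundedUnder_le_of_le _ (fun ω => abs_nonneg _)
  have hcobS : Filter.IsCoboundedUnder (· ≤ ·) (ae μ) (fun ω => |X ω + Y ω|) :=
    Filter.isCoboundedUnder_le_of_le _ (fun ω => abs_nonneg _)
  have hmul : ∀ (s t : Set ℝ), MeasurableSet s → MeasurableSet t →
      μ (X ⁻¹' s ∩ Y ⁻¹' t) = μ (X ⁻¹' s) * μ (Y ⁻¹' t) :=
    fun s t hs ht => hindep.measure_inter_preimage_eq_mul s t hs ht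
  -- first conjunct
  have hdiff : essSup (fun ω => |X ω - Y ω|) μ = M - m := by
    refine le_antisymm (essSup_le'' hcobD hub1) ?_
    by_contra hlt
    push_neg at hlt
    set c := essSup (fun ω => |X ω - Y ω|) μ with hc
    have hbddD : Filter.IsBoundedUnder (· ≤ ·) (ae μ) (fun ω => |X ω - Y ω|) :=
      ⟨M - m, Filter.eventually_map.mpr hub1⟩
    have hcae : ∀ᵐ ω ∂μ, |X ω - Y ω| ≤ c := ae_le_essSup hbddD
    set ε := (M - m - c) / 2 with hε
    have hεpos : 0 < ε := by simp only [hε]; linarith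
    have hA : μ (X ⁻¹' Set.Ioi (M - ε)) ≠ 0 := by
      have : (M - ε : ℝ) < essSup X μ := by rw [← hM]; linarith
      exact meas_gt_ne_zero' hcobX this
    have hB : μ (Y ⁻¹' Set.Iio (m + ε)) ≠ 0 := by
      rw [← hpre _ measurableSet_Iio]
      have : essInf X μ < (m + ε : ℝ) := by rw [← hm]; linarith
      exact meas_lt_ne_zero' hcobX' this
    have hAB : μ (X ⁻¹' Set.Ioi (M - ε) ∩ Y ⁻¹' Set.Iio (m + ε)) ≠ 0 := by
      rw [hmul _ _ measurableSet_Ioi measurableSet_Iio]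
      exact mul_ne_zero hA hB
    have hsub : X ⁻¹' Set.Ioi (M - ε) ∩ Y ⁻¹' Set.Iio (m + ε) ⊆
        {ω | ¬ |X ω - Y ω| ≤ c} := by
      rintro ω ⟨h1, h2⟩
      simp only [Set.mem_preimage, Set.mem_Ioi] at h1
      simp only [Set.mem_preimage, Set.mem_Iio] at h2
      simp only [Set.mem_setOf_eq, not_le]
      calc c = M - m - 2 * ε := by simp only [hε]; ring
        _ < X ω - Y ω := by linarith
        _ ≤ |X ω - Y ω| := le_abs_self _
    exact hAB (measure_mono_null hsub (ae_iff.mp hcae))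
  -- third conjunct
  have hsum : essSup (fun ω => |X ω + Y ω|) μ = 2 * K := by
    refine le_antisymm (essSup_le'' hcobS hub2) ?_
    by_contra hlt
    push_neg at hlt
    set c := essSup (fun ω => |X ω + Y ω|) μ with hc
    have hbddS : Filter.IsBoundedUnder (· ≤ ·) (ae μ) (fun ω => |X ω + Y ω|) :=
      ⟨2 * K, Filter.eventually_map.mpr hub2⟩
    have hcae : ∀ᵐ ω ∂μ, |X ω + Y ω| ≤ c := ae_le_essSup hbddS
    rcases le_total (-m) M with hcase | hcase
    · -- K = M
      have hKM : K = M := max_eq_left hcase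
      set ε := (2 * M - c) / 2 with hε
      have hεpos : 0 < ε := by simp only [hε]; rw [hKM] at hlt; linarith
      have hA : μ (X ⁻¹' Set.Ioi (M - ε)) ≠ 0 := by
        have : (M - ε : ℝ) < essSup X μ := by rw [← hM]; linarith
        exact meas_gt_ne_zero' hcobX this
      have hB : μ (Y ⁻¹' Set.Ioi (M - ε)) ≠ 0 := by
        rw [← hpre _ measurableSet_Ioi]; exact hA
      have hAB : μ (X ⁻¹' Set.Ioi (M - ε) ∩ Y ⁻¹' Set.Ioi (M - ε)) ≠ 0 := by
        rw [hmul _ _ measurableSet_Ioi measurableSet_Ioi]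
        exact mul_ne_zero hA hB
      have hsub : X ⁻¹' Set.Ioi (M - ε) ∩ Y ⁻¹' Set.Ioi (M - ε) ⊆
          {ω | ¬ |X ω + Y ω| ≤ c} := by
        rintro ω ⟨h1, h2⟩
        simp only [Set.mem_preimage, Set.mem_Ioi] at h1 h2
        simp only [Set.mem_setOf_eq, not_le]
        calc c = 2 * M - 2 * ε := by simp only [hε]; ring
          _ < X ω + Y ω := by linarith
          _ ≤ |X ω + Y ω| := le_abs_self _
      exact hAB (measure_mono_null hsub (ae_iff.mp hcae))
    · -- K = -m
      have hKm : K = -m := max_eq_right hcase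
      set ε := (-2 * m - c) / 2 with hε
      have hεpos : 0 < ε := by simp only [hε]; rw [hKm] at hlt; linarith
      have hA : μ (X ⁻¹' Set.Iio (m + ε)) ≠ 0 := by
        have : essInf X μ < (m + ε : ℝ) := by rw [← hm]; linarith
        exact meas_lt_ne_zero' hcobX' this
      have hB : μ (Y ⁻¹' Set.Iio (m + ε)) ≠ 0 := by
        rw [← hpre _ measurableSet_Iio]; exact hA
      have hAB : μ (X ⁻¹' Set.Iio (m + ε) ∩ Y ⁻¹' Set.Iio (m + ε)) ≠ 0 := by
        rw [hmul _ _ measurableSet_Iio measurableSet_Iio]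
        exact mul_ne_zero hA hB
      have hsub : X ⁻¹' Set.Iio (m + ε) ∩ Y ⁻¹' Set.Iio (m + ε) ⊆
          {ω | ¬ |X ω + Y ω| ≤ c} := by
        rintro ω ⟨h1, h2⟩
        simp only [Set.mem_preimage, Set.mem_Iio] at h1 h2
        simp only [Set.mem_setOf_eq, not_le]
        calc c = -2 * m - 2 * ε := by simp only [hε]; ring
          _ < -(X ω + Y ω) := by linarith
          _ ≤ |X ω + Y ω| := neg_le_abs _
      exact hAB (measure_mono_null hsub (ae_iff.mp hcae))
  have h2 : M - m ≤ 2 * max |M| |m| := by rw [hK]; linarith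
  refine ⟨hdiff, h2, by rw [hK]; exact hsum, ?_⟩
  rw [hdiff, hsum]
  linarith
end

section
/- For every α > 2 there exist i.i.d. real random variables X, Y (taking only two values) such that E|X−Y|^α > E|X+Y|^α. -/
set_option maxHeartbeats 1000000

open MeasureTheory ProbabilityTheory Real


lemma key_ineq (α : ℝ) (hα : 2 < α) {c M q p : ℝ}
    (hc : c = α / 2 ^ α) (hM : M = max (4*(α-1)) ((4:ℝ) ^ ((α+1)/(α-2))))
    (hq : q = c / M) (hp : p = 1 - q) :
    p*p*2^α + 2*(p*q*(M-1)^α) + q*q*((2*M)^α) < 2*(p*q*(M+1)^α) := by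
  have hαpos : (0:ℝ) < α := by linarith
  have h2α : (0:ℝ) < 2 ^ α := rpow_pos_of_pos two_pos α
  have hcpos : 0 < c := by rw [hc]; positivity
  have h24 : (2:ℝ) ^ (2:ℝ) = 4 := by
    have := Real.rpow_natCast (2:ℝ) 2
    norm_num at this; linarith
  have h4lt : (4:ℝ) < 2 ^ α := by
    rw [← h24]
    exact Real.rpow_lt_rpow_left_iff one_lt_two |>.mpr hα
  have hclt : c < α - 1 := by
    have h1 : c < α / 4 := by
      rw [hc]
      exact div_lt_div_of_pos_left hαpos (by norm_num) h4lt
    linarith [h1]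
  have hMa : 4*(α-1) ≤ M := by rw [hM]; exact le_max_left _ _
  have hM2 : 2 ≤ M := by nlinarith
  have hM0 : (0:ℝ) < M := by linarith
  have hM1 : (1:ℝ) < M := by linarith
  have hq0 : 0 < q := by rw [hq]; positivity
  have hq1 : q < 1/4 := by
    rw [hq, div_lt_iff₀ hM0]; nlinarith
  have hp34 : 3/4 < p := by rw [hp]; linarith
  have hp1 : p < 1 := by rw [hp]; linarith
  have hqM : q * M = c := by rw [hq]; field_simp
  have hc2α : c * 2 ^ α = α := by rw [hc]; field_simp
  set D := M ^ (α - 2) with hD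
  set B := (M-1) ^ (α - 1) with hB
  have hD0 : 0 < D := rpow_pos_of_pos hM0 _
  have hB0 : 0 ≤ B := rpow_nonneg (by linarith) _
  -- Step A : (M-1)^α + 2α B ≤ (M+1)^α
  have hA : (M-1)^α + 2*α*B ≤ (M+1)^α := by
    set s : ℝ := 2/(M-1) with hs
    have hs0 : 0 ≤ s := div_nonneg (by norm_num) (by linarith)
    have hBern : 1 + α*s ≤ (1+s)^α :=
      one_add_mul_self_le_rpow_one_add (by linarith) (by linarith)
    have hne : M - 1 ≠ 0 := by linarith
    have hsplit : M+1 = (M-1)*(1+s) := by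
      rw [hs, mul_add, mul_one, mul_comm (M-1) (2/(M-1)), div_mul_cancel₀ _ hne]; ring
    have hA0 : (0:ℝ) ≤ (M-1)^α := rpow_nonneg (by linarith) _
    have hAB : (M-1)^α = B*(M-1) := by
      have h := Real.rpow_add (by linarith : (0:ℝ) < M-1) (α-1) 1
      rw [show (α-1)+1 = α by ring, Real.rpow_one] at h
      rw [hB, h]
    have hs2 : (M-1)*s = 2 := by
      rw [hs, mul_comm (M-1) (2/(M-1)), div_mul_cancel₀ _ (by linarith : M - 1 ≠ 0)]
    have hAs : (M-1)^α * s = 2*B := by rw [hAB]; linear_combination B*hs2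
    have hmul : (M+1)^α = (M-1)^α * (1+s)^α := by
      rw [hsplit, Real.mul_rpow (by linarith) (by linarith)]
    have step := mul_le_mul_of_nonneg_left hBern hA0
    have expand : (M-1)^α * (1+α*s) = (M-1)^α + 2*α*B := by
      linear_combination α*hAs
    linarith [hmul, step, expand]
  -- Step B : (3/4) M^(α-1) ≤ B
  have hMm1 : (0:ℝ) ≤ M ^ (α-1) := rpow_nonneg hM0.le _
  have hBlow : (3/4) * M^(α-1) ≤ B := by
    have hs1 : (-1:ℝ) ≤ -1/M := by
      rw [neg_div]
      have : 1/M ≤ 1 := by rw [div_le_one hM0]; linarith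
      linarith
    have hBern := one_add_mul_self_le_rpow_one_add hs1 (show (1:ℝ) ≤ α-1 by linarith)
    have hfrac : (α-1)/M ≤ 1/4 := by
      rw [div_le_div_iff₀ hM0 (by norm_num)]; linarith
    have h34 : (3/4:ℝ) ≤ (1 + -1/M)^(α-1) := by
      have : 1 + (α-1)*(-1/M) = 1 - (α-1)/M := by ring
      nlinarith [hBern]
    have hsplit2 : M - 1 = M * (1 + -1/M) := by field_simp; ring
    have : B = M^(α-1) * (1 + -1/M)^(α-1) := by
      rw [hB, hsplit2, Real.mul_rpow hM0.le (by linarith)]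
    rw [this]
    exact le_trans (by linarith [mul_le_mul_of_nonneg_left h34 hMm1]) le_rfl
  -- relation q * M^(α-1) = c * D
  have hMsplit1 : M^(α-1) = D * M := by
    have h := Real.rpow_add hM0 (α-2) 1
    rw [show (α-2)+1 = α-1 by ring, Real.rpow_one] at h
    rw [hD, h]
  have hqMm1 : q * M^(α-1) = c * D := by
    rw [hMsplit1]; linear_combination D*hqM
  -- h1 : lower bound for RHS
  have h1 : 2*(p*q*(M-1)^α) + (9/4)*α*c*D ≤ 2*(p*q*(M+1)^α) := by
    have h2pq0 : (0:ℝ) ≤ 2*(p*q) := by positivity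
    have step1 := mul_le_mul_of_nonneg_left hA h2pq0
    have step2 : (9/4)*α*c*D ≤ 2*(p*q)*(2*α*B) := by
      have e1 : (9/4)*α*c*D = 3*α*((3/4) * (q * M^(α-1))) := by
        rw [hqMm1]; ring
      calc (9/4)*α*c*D = 3*(α*q)*((3/4) * M^(α-1)) := by rw [e1]; ring
        _ ≤ 3*(α*q)*B := by
            apply mul_le_mul_of_nonneg_left hBlow (by positivity)
        _ = 4*α*((3/4)*(q*B)) := by ring
        _ ≤ 4*α*(p*(q*B)) := by
            apply mul_le_mul_of_nonneg_left _ (by positivity)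
            exact mul_le_mul_of_nonneg_right hp34.le (by positivity)
        _ = 2*(p*q)*(2*α*B) := by ring
    nlinarith [step1, step2]
  -- h2 : q*q*(2M)^α = α c D
  have hMsplit2 : M ^ α = D * (M * M) := by
    have h := Real.rpow_add hM0 (α-2) 2
    rw [show (α-2)+2 = α by ring] at h
    have h2 : M ^ (2:ℝ) = M * M := by
      rw [Real.rpow_two]; ring
    rw [hD, h, h2]
  have h2 : q*q*((2*M)^α) = α*c*D := by
    rw [Real.mul_rpow (by norm_num) hM0.le, hMsplit2]
    linear_combination (2^α*D*(q*M + c))*hqM + c*D*hc2α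
  -- h3
  have h3 : p*p*2^α ≤ 2^α := by
    nlinarith [mul_nonneg (show 0 ≤ 1 - p*p by nlinarith) h2α.le]
  -- h4 : 2^α + α c D < (9/4) α c D
  have hMb : (4:ℝ) ^ ((α+1)/(α-2)) ≤ M := by rw [hM]; exact le_max_right _ _
  have hD4 : (4:ℝ)^(α+1) ≤ D := by
    have h1' := Real.rpow_le_rpow (rpow_nonneg (by norm_num) _) hMb
      (by linarith : (0:ℝ) ≤ α-2)
    rwa [← Real.rpow_mul (by norm_num), div_mul_cancel₀ _ (by linarith : α - 2 ≠ 0)] at h1'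
  have h41 : (4:ℝ)^(α+1) = 4*(2^α*2^α) := by
    rw [Real.rpow_add (by norm_num), Real.rpow_one,
      show (4:ℝ) = 2*2 by norm_num, Real.mul_rpow two_pos.le two_pos.le]; ring
  have key4 : α*c*((4:ℝ)^(α+1)) = 4*α*α*2^α := by
    rw [h41]; linear_combination 4*α*2^α*hc2α
  have h4 : 2^α + α*c*D < (9/4)*(α*c*D) := by
    have hstep := mul_le_mul_of_nonneg_left hD4 (by positivity : (0:ℝ) ≤ α*c)
    have hprod : 0 ≤ (α*α - 4) * 2^α :=
      mul_nonneg (by nlinarith) h2α.le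
    nlinarith [hstep, key4]
  linarith [h1, h2, h3, h4]

open MeasureTheory ProbabilityTheory

theorem counterexample_exists (α : ℝ) (hα : 2 < α) :
    ∃ (Ω : Type) (_ : MeasurableSpace Ω) (μ : Measure Ω) (_ : IsProbabilityMeasure μ)
      (X Y : Ω → ℝ),
      IndepFun X Y μ ∧ IdentDistrib X Y μ μ ∧
      (∃ u v : ℝ, ∀ ω, X ω = u ∨ X ω = v) ∧
      (∫ ω, |X ω + Y ω| ^ α ∂μ) < ∫ ω, |X ω - Y ω| ^ α ∂μ := by
  set c := α / (2:ℝ)^α with hc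
  set M := max (4*(α-1)) ((4:ℝ) ^ ((α+1)/(α-2))) with hM
  set q := c / M with hq
  set p := 1 - q with hp
  have h2α : (0:ℝ) < 2 ^ α := rpow_pos_of_pos two_pos α
  have hαpos : (0:ℝ) < α := by linarith
  have hcpos : 0 < c := by rw [hc]; positivity
  have hMa : 4*(α-1) ≤ M := le_max_left _ _
  have hM2 : 2 ≤ M := by nlinarith
  have hM0 : (0:ℝ) < M := by linarith
  have hq0 : 0 < q := by rw [hq]; positivity
  have hcM : c < M := by
    have : c < α - 1 := by
      have h24 : (2:ℝ) ^ (2:ℝ) = 4 := by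
        have := Real.rpow_natCast (2:ℝ) 2
        norm_num at this; linarith
      have h4lt : (4:ℝ) < 2 ^ α := by
        rw [← h24]; exact Real.rpow_lt_rpow_left_iff one_lt_two |>.mpr hα
      have h1 : c < α / 4 := by
        rw [hc]; exact div_lt_div_of_pos_left hαpos (by norm_num) h4lt
      linarith
    linarith
  have hq1 : q < 1 := by rw [hq, div_lt_one hM0]; exact hcM
  have hp0 : 0 ≤ p := by rw [hp]; linarith
  have hq0' : (0:ℝ) ≤ q := hq0.le
  -- the measure on Bool
  set ν : Measure Bool :=
    ENNReal.ofReal p • Measure.dirac true + ENNReal.ofReal q • Measure.dirac false with hν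
  have hνt : ν {true} = ENNReal.ofReal p := by simp [hν]
  have hνf : ν {false} = ENNReal.ofReal q := by simp [hν]
  haveI : IsProbabilityMeasure ν := by
    constructor
    simp [hν, ← ENNReal.ofReal_add hp0 hq0', hp]
    rw [← ENNReal.ofReal_add (by linarith) hq0', sub_add_cancel, ENNReal.ofReal_one]
  set f : Bool → ℝ := fun b => if b then 1 else -M with hf
  have hfm : Measurable f := measurable_of_countable f
  refine ⟨Bool × Bool, inferInstance, ν.prod ν, inferInstance,
    fun ω => f ω.1, fun ω => f ω.2, ?_, ?_, ⟨1, -M, fun ω => by cases h : ω.1 <;> simp [hf, h]⟩, ?_⟩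
  · -- IndepFun
    show IndepFun (f ∘ Prod.fst) (f ∘ Prod.snd) (ν.prod ν)
    rw [indepFun_iff_map_prod_eq_prod_map_map
      ((hfm.comp measurable_fst).aemeasurable) ((hfm.comp measurable_snd).aemeasurable)]
    have h1 : (fun ω : Bool × Bool => ((f ∘ Prod.fst) ω, (f ∘ Prod.snd) ω)) = Prod.map f f := rfl
    rw [h1, ← Measure.map_prod_map _ _ hfm hfm,
      ← Measure.map_map hfm measurable_fst, ← Measure.map_map hfm measurable_snd,
      Measure.map_fst_prod, Measure.map_snd_prod]
    simp only [measure_univ, one_smul]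
  · -- IdentDistrib
    refine ⟨(hfm.comp measurable_fst).aemeasurable, (hfm.comp measurable_snd).aemeasurable, ?_⟩
    have e1 : (fun ω : Bool × Bool => f ω.1) = f ∘ Prod.fst := rfl
    have e2 : (fun ω : Bool × Bool => f ω.2) = f ∘ Prod.snd := rfl
    rw [e1, e2, ← Measure.map_map hfm measurable_fst, ← Measure.map_map hfm measurable_snd,
      Measure.map_fst_prod, Measure.map_snd_prod]
  · -- the integral inequality
    have hwt : ∀ a b : Bool, ((ν.prod ν) {(a, b)}).toReal
        = (if a then p else q) * (if b then p else q) := by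
      intro a b
      rw [← Set.singleton_prod_singleton, Measure.prod_prod, ENNReal.toReal_mul]
      cases a <;> cases b <;>
        simp [hνt, hνf, ENNReal.toReal_ofReal hp0, ENNReal.toReal_ofReal hq0']
    rw [integral_fintype Integrable.of_finite, integral_fintype Integrable.of_finite]
    simp only [Fintype.sum_prod_type, Fintype.sum_bool, smul_eq_mul, Measure.real, hwt]
    simp only [hf, if_true, if_false, Bool.cond_true]
    norm_num
    have habs1 : |1 + -M| = M - 1 := by rw [abs_of_nonpos (by linarith)]; ring
    have habs2 : |-M + 1| = M - 1 := by rw [abs_of_nonpos (by linarith)]; ring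
    have habs3 : |-M + -M| = 2*M := by rw [abs_of_nonpos (by linarith)]; ring
    have habs4 : |1 + M| = M + 1 := by rw [abs_of_nonneg (by linarith)]; ring
    have habs5 : |-M - 1| = M + 1 := by rw [abs_of_nonpos (by linarith)]; ring
    rw [habs1, habs2, habs3, habs4, habs5, Real.zero_rpow (by linarith : α ≠ 0)]
    have K := key_ineq α hα hc hM hq hp
    nlinarith [K]
end

section
/- Fix α > 2 and 0 < c < 2^{2−α}·α. For M ≥ max{c,1}, let q = c/M, p = 1−q, and let X_M, Y_M be i.i.d. with P(X_M=1)=p and P(X_M=−M)=q. Then E|X_M−Y_M|^α − E|X_M+Y_M|^α ≥ M^{α−2}(4pαc − 2^α c²) − 2^α p², which is positive for all sufficiently large M. -/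
open MeasureTheory ProbabilityTheory

open Set in
lemma aux_convex_ineq (α : ℝ) (hα : 2 ≤ α) {x : ℝ} (hx0 : 0 ≤ x) (hx1 : x ≤ 1) :
    2 * α * x ≤ (1 + x) ^ α - (1 - x) ^ α := by
  set F : ℝ → ℝ := fun t => (1 + t) ^ α - (1 - t) ^ α - 2 * α * t with hF
  have hder : ∀ t : ℝ, HasDerivAt F
      (α * (1 + t) ^ (α - 1) + α * (1 - t) ^ (α - 1) - 2 * α) t := by
    intro t
    have h1 : HasDerivAt (fun t : ℝ => 1 + t) 1 t := (hasDerivAt_id t).const_add 1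
    have h2 : HasDerivAt (fun t : ℝ => 1 - t) (-1) t := (hasDerivAt_id t).const_sub 1
    have h1' := h1.rpow_const (p := α) (Or.inr (by linarith))
    have h2' := h2.rpow_const (p := α) (Or.inr (by linarith))
    have h3 : HasDerivAt (fun t : ℝ => 2 * α * t) (2 * α) t := by
      simpa using (hasDerivAt_id t).const_mul (2 * α)
    have := (h1'.sub h2').sub h3
    refine this.congr_deriv ?_
    ring
  have hmono : MonotoneOn F (Icc 0 1) := by
    apply monotoneOn_of_deriv_nonneg (convex_Icc 0 1)
    · exact fun t _ => (hder t).differentiableAt.continuousAt.continuousWithinAt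
    · exact fun t _ => (hder t).differentiableAt.differentiableWithinAt
    · intro t ht
      rw [interior_Icc] at ht
      rw [(hder t).deriv]
      have hconv := convexOn_rpow (p := α - 1) (by linarith)
      have h12 : (0:ℝ) ≤ 1/2 := by norm_num
      have := hconv.2 (x := 1 + t) (y := 1 - t) (by simp; linarith [ht.1])
        (by simp; linarith [ht.2]) h12 h12 (by norm_num)
      simp only [smul_eq_mul] at this
      have hmid : (1/2 : ℝ) * (1 + t) + (1/2) * (1 - t) = 1 := by ring
      rw [hmid, Real.one_rpow] at this
      nlinarith [this]
  have := hmono (left_mem_Icc.2 (by norm_num)) (mem_Icc.2 ⟨hx0, hx1⟩) hx0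
  simp only [hF] at this
  norm_num at this
  linarith [this]


open Set in
lemma integral_two_point {Ω : Type} [MeasurableSpace Ω] (μ : Measure Ω)
    [IsProbabilityMeasure μ] (X Y : Ω → ℝ) (hX : Measurable X) (hY : Measurable Y)
    (a b : ℝ) (hab : a ≠ b)
    (hXfull : ∀ᵐ ω ∂μ, X ω = a ∨ X ω = b) (hYfull : ∀ᵐ ω ∂μ, Y ω = a ∨ Y ω = b)
    (φ : ℝ → ℝ → ℝ) :
    ∫ ω, φ (X ω) (Y ω) ∂μ
      = (μ (X ⁻¹' {a} ∩ Y ⁻¹' {a})).toReal * φ a a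
        + (μ (X ⁻¹' {a} ∩ Y ⁻¹' {b})).toReal * φ a b
        + (μ (X ⁻¹' {b} ∩ Y ⁻¹' {a})).toReal * φ b a
        + (μ (X ⁻¹' {b} ∩ Y ⁻¹' {b})).toReal * φ b b := by
  set Saa := X ⁻¹' {a} ∩ Y ⁻¹' {a} with hSaa
  set Sab := X ⁻¹' {a} ∩ Y ⁻¹' {b} with hSab
  set Sba := X ⁻¹' {b} ∩ Y ⁻¹' {a} with hSba
  set Sbb := X ⁻¹' {b} ∩ Y ⁻¹' {b} with hSbb
  have mSaa : MeasurableSet Saa := (hX (measurableSet_singleton a)).inter (hY (measurableSet_singleton a))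
  have mSab : MeasurableSet Sab := (hX (measurableSet_singleton a)).inter (hY (measurableSet_singleton b))
  have mSba : MeasurableSet Sba := (hX (measurableSet_singleton b)).inter (hY (measurableSet_singleton a))
  have mSbb : MeasurableSet Sbb := (hX (measurableSet_singleton b)).inter (hY (measurableSet_singleton b))
  have hae : (fun ω => φ (X ω) (Y ω)) =ᵐ[μ]
      fun ω => Saa.indicator (fun _ => φ a a) ω + Sab.indicator (fun _ => φ a b) ω
        + Sba.indicator (fun _ => φ b a) ω + Sbb.indicator (fun _ => φ b b) ω := by
    filter_upwards [hXfull, hYfull] with ω hx hy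
    rcases hx with hx | hx <;> rcases hy with hy | hy <;>
      simp [hSaa, hSab, hSba, hSbb, Set.indicator_apply, Set.mem_inter_iff, hx, hy, hab,
        Ne.symm hab]
  have i1 : Integrable (Saa.indicator fun _ => φ a a) μ := (integrable_const _).indicator mSaa
  have i2 : Integrable (Sab.indicator fun _ => φ a b) μ := (integrable_const _).indicator mSab
  have i3 : Integrable (Sba.indicator fun _ => φ b a) μ := (integrable_const _).indicator mSba
  have i4 : Integrable (Sbb.indicator fun _ => φ b b) μ := (integrable_const _).indicator mSbb
  have i12 : Integrable (fun ω => Saa.indicator (fun _ => φ a a) ω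
      + Sab.indicator (fun _ => φ a b) ω) μ := i1.add i2
  have i123 : Integrable (fun ω => Saa.indicator (fun _ => φ a a) ω
      + Sab.indicator (fun _ => φ a b) ω + Sba.indicator (fun _ => φ b a) ω) μ := i12.add i3
  rw [integral_congr_ae hae, integral_add i123 i4, integral_add i12 i3, integral_add i1 i2,
    integral_indicator_const _ mSaa, integral_indicator_const _ mSab,
    integral_indicator_const _ mSba, integral_indicator_const _ mSbb]
  simp [smul_eq_mul, mul_comm, measureReal_def]


open Set in
lemma aux_pos (α c : ℝ) (hα : 2 < α) (hc0 : 0 < c) (hc : c < 2 ^ (2 - α) * α) :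
    ∃ M₀ : ℝ, ∀ M : ℝ, M₀ ≤ M → max c 1 ≤ M →
        0 < M ^ (α - 2) * (4 * (1 - c / M) * α * c - 2 ^ α * c ^ 2)
              - 2 ^ α * (1 - c / M) ^ 2 := by
  have h2α : (0:ℝ) < 2 ^ α := Real.rpow_pos_of_pos two_pos α
  obtain ⟨δ, hδdef⟩ : ∃ δ : ℝ, δ = 4 * α - 2 ^ α * c := ⟨_, rfl⟩
  have hδ : 0 < δ := by
    have h1 : 2 ^ α * c < 2 ^ α * (2 ^ (2 - α) * α) := by
      exact mul_lt_mul_of_pos_left hc h2α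
    have h2 : (2:ℝ) ^ α * 2 ^ (2 - α) = 4 := by
      rw [← Real.rpow_add two_pos]
      norm_num
    rw [← mul_assoc, h2] at h1
    rw [hδdef]; linarith
  have hcδ : 0 < c * δ := mul_pos hc0 hδ
  have h2exp : (2:ℝ) ^ (α + 1) = 2 ^ α * 2 := by
    rw [Real.rpow_add two_pos, Real.rpow_one]
  refine ⟨max (8 * α * c / δ + 1) ((2 ^ (α + 1) / (c * δ) + 1) ^ (α - 2)⁻¹), fun M hM0 hMc => ?_⟩
  have hM1 : (1:ℝ) ≤ M := le_trans (le_max_right c 1) hMc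
  have hMpos : (0:ℝ) < M := by linarith
  have hcM : c ≤ M := le_trans (le_max_left c 1) hMc
  have hq1 : c / M ≤ 1 := (div_le_one hMpos).2 hcM
  have hq0 : 0 < c / M := div_pos hc0 hMpos
  -- bracket bound
  have h8 : 8 * α * c / δ + 1 ≤ M := le_trans (le_max_left _ _) hM0
  have h8' : 8 * α * c ≤ M * δ := by
    have := (div_le_iff₀ hδ).mp (by linarith : 8 * α * c / δ ≤ M)
    linarith
  have expand : 4 * (1 - c / M) * α * c - 2 ^ α * c ^ 2 = c * δ - 4 * α * c ^ 2 / M := by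
    rw [hδdef]
    field_simp
    ring
  have hb : c * δ / 2 ≤ 4 * (1 - c / M) * α * c - 2 ^ α * c ^ 2 := by
    rw [expand]
    have : 4 * α * c ^ 2 / M ≤ c * δ / 2 := by
      rw [div_le_iff₀ hMpos]
      nlinarith [mul_le_mul_of_nonneg_left h8' hc0.le]
    linarith
  -- power bound
  have hK0 : (0:ℝ) ≤ 2 ^ (α + 1) / (c * δ) + 1 := by positivity
  have hpow : 2 ^ (α + 1) / (c * δ) + 1 ≤ M ^ (α - 2) := by
    have h1 : (2 ^ (α + 1) / (c * δ) + 1) ^ (α - 2)⁻¹ ≤ M := le_trans (le_max_right _ _) hM0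
    calc 2 ^ (α + 1) / (c * δ) + 1
        = ((2 ^ (α + 1) / (c * δ) + 1) ^ (α - 2)⁻¹) ^ (α - 2) := by
          rw [Real.rpow_inv_rpow hK0 (by linarith : α - 2 ≠ 0)]
      _ ≤ M ^ (α - 2) := Real.rpow_le_rpow (by positivity) h1 (by linarith)
  have hMp : (0:ℝ) ≤ M ^ (α - 2) := (Real.rpow_pos_of_pos hMpos _).le
  have e1 : M ^ (α - 2) * (c * δ / 2) ≤ M ^ (α - 2) * (4 * (1 - c / M) * α * c - 2 ^ α * c ^ 2) :=
    mul_le_mul_of_nonneg_left hb hMp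
  have e2 : (2 ^ (α + 1) / (c * δ) + 1) * (c * δ / 2) ≤ M ^ (α - 2) * (c * δ / 2) :=
    mul_le_mul_of_nonneg_right hpow (by positivity)
  have e3 : (2 ^ (α + 1) / (c * δ) + 1) * (c * δ / 2) = 2 ^ α + c * δ / 2 := by
    rw [h2exp]
    field_simp
  have hsq : (1 - c / M) ^ 2 ≤ 1 := by nlinarith
  have e4 : 2 ^ α * (1 - c / M) ^ 2 ≤ 2 ^ α := by
    calc 2 ^ α * (1 - c / M) ^ 2 ≤ 2 ^ α * 1 := mul_le_mul_of_nonneg_left hsq h2α.le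
      _ = 2 ^ α := mul_one _
  linarith


theorem counterexample_bound (α c : ℝ) (hα : 2 < α)
    (hc0 : 0 < c) (hc : c < 2 ^ (2 - α) * α) :
    (∀ M : ℝ, max c 1 ≤ M →
      ∀ (Ω : Type) (_ : MeasurableSpace Ω) (μ : Measure Ω), IsProbabilityMeasure μ →
        ∀ X Y : Ω → ℝ, IndepFun X Y μ → IdentDistrib X Y μ μ →
          μ {ω | X ω = 1} = ENNReal.ofReal (1 - c / M) →
          μ {ω | X ω = -M} = ENNReal.ofReal (c / M) →
          M ^ (α - 2) * (4 * (1 - c / M) * α * c - 2 ^ α * c ^ 2)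
              - 2 ^ α * (1 - c / M) ^ 2
            ≤ (∫ ω, |X ω - Y ω| ^ α ∂μ) - ∫ ω, |X ω + Y ω| ^ α ∂μ)
    ∧ ∃ M₀ : ℝ, ∀ M : ℝ, M₀ ≤ M → max c 1 ≤ M →
        0 < M ^ (α - 2) * (4 * (1 - c / M) * α * c - 2 ^ α * c ^ 2)
              - 2 ^ α * (1 - c / M) ^ 2 := by
  constructor
  · intro M hM Ω mΩ μ hμ X Y hXY hid hX1 hXM
    haveI := hμ
    have hM1 : (1:ℝ) ≤ M := le_trans (le_max_right c 1) hM
    have hM0 : (0:ℝ) < M := by linarith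
    have hcM : c ≤ M := le_trans (le_max_left c 1) hM
    set q : ℝ := c / M with hqdef
    set p : ℝ := 1 - c / M with hpdef
    have hq0 : 0 < q := div_pos hc0 hM0
    have hq1 : q ≤ 1 := (div_le_one hM0).2 hcM
    have hp0 : 0 ≤ p := by rw [hpdef]; linarith
    have hpq : p + q = 1 := by rw [hpdef, hqdef]; ring
    -- measurable modifications
    have hXm : AEMeasurable X μ := hid.aemeasurable_fst
    have hYm : AEMeasurable Y μ := hid.aemeasurable_snd
    set X' := hXm.mk X with hX'def
    set Y' := hYm.mk Y with hY'def
    have hX'm : Measurable X' := hXm.measurable_mk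
    have hY'm : Measurable Y' := hYm.measurable_mk
    have hXeq : X =ᵐ[μ] X' := hXm.ae_eq_mk
    have hYeq : Y =ᵐ[μ] Y' := hYm.ae_eq_mk
    have hXY' : IndepFun X' Y' μ := hXY.congr hXeq hYeq
    have hid' : IdentDistrib X' Y' μ μ :=
      (IdentDistrib.of_ae_eq hXm hXeq).symm.trans (hid.trans (IdentDistrib.of_ae_eq hYm hYeq))
    have hab : (1:ℝ) ≠ -M := by intro h; linarith [h]
    -- measures of the four basic events
    have hA : μ (X' ⁻¹' {1}) = ENNReal.ofReal p := by
      rw [← hX1]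
      apply measure_congr
      apply Filter.eventuallyEq_set.2
      filter_upwards [hXeq] with ω h
      simp [Set.mem_preimage, Set.mem_setOf_eq, h]
    have hA' : μ (X' ⁻¹' {-M}) = ENNReal.ofReal q := by
      rw [← hXM]
      apply measure_congr
      apply Filter.eventuallyEq_set.2
      filter_upwards [hXeq] with ω h
      simp [Set.mem_preimage, Set.mem_setOf_eq, h]
    have hB : μ (Y' ⁻¹' {1}) = ENNReal.ofReal p :=
      (hid'.measure_mem_eq (measurableSet_singleton 1)).symm.trans hA
    have hB' : μ (Y' ⁻¹' {-M}) = ENNReal.ofReal q :=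
      (hid'.measure_mem_eq (measurableSet_singleton (-M))).symm.trans hA'
    -- a.e. two-valued
    have hful : ∀ (Z : Ω → ℝ), Measurable Z → μ (Z ⁻¹' {1}) = ENNReal.ofReal p →
        μ (Z ⁻¹' {-M}) = ENNReal.ofReal q → ∀ᵐ ω ∂μ, Z ω = 1 ∨ Z ω = -M := by
      intro Z hZ hZ1 hZM
      have hdisj : Disjoint (Z ⁻¹' {1}) (Z ⁻¹' {-M}) := by
        apply Set.disjoint_left.2
        intro ω h1 h2
        simp only [Set.mem_preimage, Set.mem_singleton_iff] at h1 h2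
        rw [h1] at h2
        exact hab h2
      have hunion : μ (Z ⁻¹' {1} ∪ Z ⁻¹' {-M}) = 1 := by
        rw [measure_union hdisj (hZ (measurableSet_singleton _)), hZ1, hZM,
          ← ENNReal.ofReal_add hp0 hq0.le, hpq]
        exact ENNReal.ofReal_one
      have hcompl : μ ((Z ⁻¹' {1} ∪ Z ⁻¹' {-M})ᶜ) = 0 :=
        (prob_compl_eq_zero_iff ((hZ (measurableSet_singleton _)).union
          (hZ (measurableSet_singleton _)))).2 hunion
      rw [ae_iff]
      have hseteq : {a | ¬(Z a = 1 ∨ Z a = -M)} = (Z ⁻¹' {1} ∪ Z ⁻¹' {-M})ᶜ := by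
        ext ω
        simp [Set.mem_union]
      rw [hseteq]
      exact hcompl
    have hXful : ∀ᵐ ω ∂μ, X' ω = 1 ∨ X' ω = -M := hful X' hX'm hA hA'
    have hYful : ∀ᵐ ω ∂μ, Y' ω = 1 ∨ Y' ω = -M := hful Y' hY'm hB hB'
    -- probabilities of intersections
    have hmul : ∀ (s t : Set ℝ) (u v : ℝ), MeasurableSet s → MeasurableSet t →
        μ (X' ⁻¹' s) = ENNReal.ofReal u → μ (Y' ⁻¹' t) = ENNReal.ofReal v → 0 ≤ u → 0 ≤ v →
        (μ (X' ⁻¹' s ∩ Y' ⁻¹' t)).toReal = u * v := by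
      intro s t u v hs ht hXs hYt hu hv
      rw [hXY'.measure_inter_preimage_eq_mul s t hs ht, hXs, hYt,
        ← ENNReal.ofReal_mul hu, ENNReal.toReal_ofReal (by positivity)]
    have hPaa := hmul {1} {1} p p (measurableSet_singleton _) (measurableSet_singleton _) hA hB hp0 hp0
    have hPab := hmul {1} {-M} p q (measurableSet_singleton _) (measurableSet_singleton _) hA hB' hp0 hq0.le
    have hPba := hmul {-M} {1} q p (measurableSet_singleton _) (measurableSet_singleton _) hA' hB hq0.le hp0
    have hPbb := hmul {-M} {-M} q q (measurableSet_singleton _) (measurableSet_singleton _) hA' hB' hq0.le hq0.le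
    -- the two integrals
    have hval0 : |(1:ℝ) - 1| ^ α = 0 := by
      rw [sub_self, abs_zero, Real.zero_rpow (by linarith : α ≠ 0)]
    have hval0' : |(-M) - (-M)| ^ α = 0 := by
      rw [sub_self, abs_zero, Real.zero_rpow (by linarith : α ≠ 0)]
    have hval1 : |(1:ℝ) - -M| ^ α = (M + 1) ^ α := by
      rw [sub_neg_eq_add, abs_of_pos (by linarith)]
      congr 1
      ring
    have hval1' : |(-M) - 1| ^ α = (M + 1) ^ α := by
      rw [abs_of_nonpos (by linarith), neg_sub]
      congr 1
      ring
    have hval2 : |(1:ℝ) + 1| ^ α = 2 ^ α := by norm_num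
    have hval3 : |(1:ℝ) + -M| ^ α = (M - 1) ^ α := by
      rw [abs_of_nonpos (by linarith)]
      congr 1
      ring
    have hval3' : |(-M) + 1| ^ α = (M - 1) ^ α := by
      rw [abs_of_nonpos (by linarith)]
      congr 1
      ring
    have hval4 : |(-M) + -M| ^ α = 2 ^ α * M ^ α := by
      rw [show (-M) + -M = -(2*M) by ring, abs_neg, abs_of_pos (by linarith),
        Real.mul_rpow (by norm_num) hM0.le]
    have hI1 : ∫ ω, |X ω - Y ω| ^ α ∂μ = p * q * (M + 1) ^ α + q * p * (M + 1) ^ α := by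
      have htr : ∫ ω, |X ω - Y ω| ^ α ∂μ = ∫ ω, |X' ω - Y' ω| ^ α ∂μ := by
        apply integral_congr_ae
        filter_upwards [hXeq, hYeq] with ω h1 h2
        rw [h1, h2]
      rw [htr, integral_two_point μ X' Y' hX'm hY'm 1 (-M) hab hXful hYful
        (fun x y => |x - y| ^ α), hPaa, hPab, hPba, hPbb]
      simp only [hval0, hval0', hval1, hval1']
      ring
    have hI2 : ∫ ω, |X ω + Y ω| ^ α ∂μ = p * p * 2 ^ α + p * q * (M - 1) ^ α
        + q * p * (M - 1) ^ α + q * q * (2 ^ α * M ^ α) := by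
      have htr : ∫ ω, |X ω + Y ω| ^ α ∂μ = ∫ ω, |X' ω + Y' ω| ^ α ∂μ := by
        apply integral_congr_ae
        filter_upwards [hXeq, hYeq] with ω h1 h2
        rw [h1, h2]
      rw [htr, integral_two_point μ X' Y' hX'm hY'm 1 (-M) hab hXful hYful
        (fun x y => |x + y| ^ α), hPaa, hPab, hPba, hPbb]
      simp only [hval2, hval3, hval3', hval4]
    rw [hI1, hI2]
    -- the convexity bound
    have hx0 : (0:ℝ) ≤ 1 / M := by positivity
    have hx1 : 1 / M ≤ 1 := by rw [div_le_one hM0]; linarith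
    have hkey := aux_convex_ineq α hα.le hx0 hx1
    have hMA : (0:ℝ) ≤ M ^ α := (Real.rpow_pos_of_pos hM0 α).le
    have hsplit1 : (M + 1) ^ α = M ^ α * (1 + 1 / M) ^ α := by
      rw [← Real.mul_rpow hM0.le (by positivity)]
      congr 1
      field_simp
    have hsplit2 : (M - 1) ^ α = M ^ α * (1 - 1 / M) ^ α := by
      rw [← Real.mul_rpow hM0.le (by rw [sub_nonneg]; exact hx1)]
      congr 1
      field_simp
    have hK : 2 * α * (1 / M) * M ^ α ≤ (M + 1) ^ α - (M - 1) ^ α := by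
      rw [hsplit1, hsplit2, ← mul_sub]
      calc 2 * α * (1 / M) * M ^ α = M ^ α * (2 * α * (1 / M)) := by ring
        _ ≤ M ^ α * ((1 + 1 / M) ^ α - (1 - 1 / M) ^ α) :=
            mul_le_mul_of_nonneg_left hkey hMA
    have hAB : M ^ (α - 2) * M ^ 2 = M ^ α := by
      rw [show (M:ℝ) ^ 2 = M ^ (2:ℝ) by rw [← Real.rpow_natCast M 2]; norm_num,
        ← Real.rpow_add hM0]
      norm_num
    have hID1 : 2 * p * q * (2 * α * (1 / M) * M ^ α) = 4 * p * α * c * M ^ (α - 2) := by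
      rw [← hAB, hqdef]
      field_simp
      ring
    have hID2 : q * q * (2 ^ α * M ^ α) = 2 ^ α * c ^ 2 * M ^ (α - 2) := by
      rw [← hAB, hqdef]
      field_simp
    have hpq0 : (0:ℝ) ≤ 2 * p * q := by positivity
    have hfin := mul_le_mul_of_nonneg_left hK hpq0
    rw [hID1] at hfin
    clear_value p q X' Y'
    linarith [hfin, hID2]

  · exact aux_pos α c hα hc0 hc
end
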